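/- arXiv:1301.0460 — 13 statements merged into one kernel-verified Lean document; each statement's English description precedes it below -/
import Mathlib

section
/- If G is a simple graph without isolated vertices and e is an edge not in G, then the total domination number of G + e is at least the total domination number of G minus two. -/
/-- The total domination number of a graph, as an extended natural number
(`⊤` when no total dominating set exists). -/
noncomputable def gammaT {V : Type*} (G : SimpleGraph V) : ℕ∞ :=
  sInf {n : ℕ∞ | ∃ S : Finset V, (S.card : ℕ∞) = n ∧ ∀ v : V, ∃ u ∈ S, G.Adj v u}

/-- Adding an edge to a graph without isolated vertices can
decrease the total domination number by at most two. -/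
theorem stmt2 {V : Type*} [DecidableEq V] (G : SimpleGraph V)
    (hiso : ∀ v : V, ∃ u : V, G.Adj v u)
    (a b : V) (hab : a ≠ b) (hnadj : ¬ G.Adj a b) :
    gammaT G ≤ gammaT (G ⊔ SimpleGraph.fromEdgeSet {s(a, b)}) + 2 := by
  set G' := G ⊔ SimpleGraph.fromEdgeSet {s(a, b)} with hG'
  set A := {n : ℕ∞ | ∃ S : Finset V, (S.card : ℕ∞) = n ∧ ∀ v : V, ∃ u ∈ S, G'.Adj v u}
  by_cases hA : A.Nonempty
  · obtain ⟨S, hScard, hSdom⟩ := csInf_mem hA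
    obtain ⟨a', ha'⟩ := hiso a
    obtain ⟨b', hb'⟩ := hiso b
    set T : Finset V := insert a' (insert b' S) with hT
    have hTdom : ∀ v : V, ∃ u ∈ T, G.Adj v u := by
      intro v
      obtain ⟨u, huS, hadj⟩ := hSdom v
      rw [hG'] at hadj
      simp only [SimpleGraph.sup_adj, SimpleGraph.fromEdgeSet_adj,
        Set.mem_singleton_iff, Sym2.eq_iff] at hadj
      rcases hadj with h | ⟨h, _⟩
      · exact ⟨u, by simp [hT, huS], h⟩
      · rcases h with ⟨hv, hu⟩ | ⟨hv, hu⟩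
        · subst hv; exact ⟨a', by simp [hT], ha'⟩
        · subst hv; exact ⟨b', by simp [hT], hb'⟩
    have hmem : (T.card : ℕ∞) ∈ {n : ℕ∞ | ∃ S : Finset V, (S.card : ℕ∞) = n ∧
        ∀ v : V, ∃ u ∈ S, G.Adj v u} := ⟨T, rfl, hTdom⟩
    calc gammaT G ≤ (T.card : ℕ∞) := sInf_le hmem
      _ ≤ (S.card : ℕ∞) + 2 := by
          have : T.card ≤ S.card + 2 := by
            calc T.card ≤ (insert b' S).card + 1 := Finset.card_insert_le _ _
              _ ≤ S.card + 1 + 1 := by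
                  have := Finset.card_insert_le b' S; omega
          exact_mod_cast this
      _ = gammaT G' + 2 := by rw [hScard]; rfl
  · have : gammaT G' = ⊤ := by
      rw [Set.not_nonempty_iff_eq_empty] at hA
      simp [gammaT, ← hG', show {n : ℕ∞ | ∃ S : Finset V, (S.card : ℕ∞) = n ∧
        ∀ v : V, ∃ u ∈ S, G'.Adj v u} = A from rfl, hA]
    rw [this]
    simp
end

section
/- If a graph H is the disjoint union of two complete graphs each on at least two vertices, then H is 4-supercritical: γₜ(H) = 4 and for every missing edge e of H, γₜ(H + e) = 2. -/
/-- The disjoint union of two complete graphs, each on at least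
two vertices, is 4-supercritical. -/
theorem stmt3 {V : Type*} [Fintype V] [DecidableEq V] (H : SimpleGraph V)
    (A B : Set V)
    (hpart : ∀ v : V, (v ∈ A ∧ v ∉ B) ∨ (v ∈ B ∧ v ∉ A))
    (hA : 2 ≤ A.ncard) (hB : 2 ≤ B.ncard)
    (hadj : ∀ u v : V, H.Adj u v ↔ u ≠ v ∧ ((u ∈ A ∧ v ∈ A) ∨ (u ∈ B ∧ v ∈ B))) :
    gammaT H = 4 ∧
      ∀ u v : V, u ≠ v → ¬ H.Adj u v →
        gammaT (H ⊔ SimpleGraph.fromEdgeSet {s(u, v)}) = 2 := by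
  classical
  have hAB : ∀ x, x ∈ A → x ∉ B := by
    intro x hx
    rcases hpart x with ⟨_, h⟩ | ⟨_, h⟩
    · exact h
    · exact absurd hx h
  have hBA : ∀ x, x ∈ B → x ∉ A := by
    intro x hx
    rcases hpart x with ⟨_, h⟩ | ⟨_, h⟩
    · exact absurd hx h
    · exact h
  obtain ⟨a₁, a₂, ha₁, ha₂, ha12⟩ := (Set.one_lt_ncard_iff (Set.toFinite A)).1 (by omega)
  obtain ⟨b₁, b₂, hb₁, hb₂, hb12⟩ := (Set.one_lt_ncard_iff (Set.toFinite B)).1 (by omega)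
  have hab : ∀ x y, x ∈ A → y ∈ B → x ≠ y := by
    rintro x y hx hy rfl; exact hAB x hx hy
  constructor
  · -- gammaT H = 4
    apply le_antisymm
    · -- upper bound: {a₁,a₂,b₁,b₂}
      apply sInf_le
      refine ⟨{a₁, a₂, b₁, b₂}, ?_, ?_⟩
      · have hc : ({a₁, a₂, b₁, b₂} : Finset V).card = 4 := by
          rw [Finset.card_insert_of_notMem, Finset.card_insert_of_notMem,
            Finset.card_pair hb12]
          · simp only [Finset.mem_insert, Finset.mem_singleton]
            push_neg
            exact ⟨hab a₂ b₁ ha₂ hb₁, hab a₂ b₂ ha₂ hb₂⟩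
          · simp only [Finset.mem_insert, Finset.mem_singleton]
            push_neg
            exact ⟨ha12, hab a₁ b₁ ha₁ hb₁, hab a₁ b₂ ha₁ hb₂⟩
        rw [hc]; rfl
      · intro v
        rcases hpart v with ⟨hv, _⟩ | ⟨hv, _⟩
        · rcases eq_or_ne v a₁ with rfl | hne
          · exact ⟨a₂, by simp, (hadj v a₂).2 ⟨ha12, Or.inl ⟨hv, ha₂⟩⟩⟩
          · exact ⟨a₁, by simp, (hadj v a₁).2 ⟨hne, Or.inl ⟨hv, ha₁⟩⟩⟩
        · rcases eq_or_ne v b₁ with rfl | hne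
          · exact ⟨b₂, by simp, (hadj v b₂).2 ⟨hb12, Or.inr ⟨hv, hb₂⟩⟩⟩
          · exact ⟨b₁, by simp, (hadj v b₁).2 ⟨hne, Or.inr ⟨hv, hb₁⟩⟩⟩
    · -- lower bound
      apply le_sInf
      rintro n ⟨S, hcard, hdom⟩
      -- find two elements of S in A
      obtain ⟨s₁, hs₁S, hadj1⟩ := hdom a₁
      have hs₁A : s₁ ∈ A := by
        rcases ((hadj a₁ s₁).1 hadj1).2 with ⟨_, h⟩ | ⟨h, _⟩
        · exact h
        · exact absurd h (hAB a₁ ha₁)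
      obtain ⟨s₂, hs₂S, hadj2⟩ := hdom s₁
      have hs₂A : s₂ ∈ A := by
        rcases ((hadj s₁ s₂).1 hadj2).2 with ⟨_, h⟩ | ⟨h, _⟩
        · exact h
        · exact absurd h (hAB s₁ hs₁A)
      have hs12 : s₁ ≠ s₂ := ((hadj s₁ s₂).1 hadj2).1
      obtain ⟨t₁, ht₁S, hadj3⟩ := hdom b₁
      have ht₁B : t₁ ∈ B := by
        rcases ((hadj b₁ t₁).1 hadj3).2 with ⟨h, _⟩ | ⟨_, h⟩
        · exact absurd h (hBA b₁ hb₁)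
        · exact h
      obtain ⟨t₂, ht₂S, hadj4⟩ := hdom t₁
      have ht₂B : t₂ ∈ B := by
        rcases ((hadj t₁ t₂).1 hadj4).2 with ⟨h, _⟩ | ⟨_, h⟩
        · exact absurd h (hBA t₁ ht₁B)
        · exact h
      have ht12 : t₁ ≠ t₂ := ((hadj t₁ t₂).1 hadj4).1
      have hsub : ({s₁, s₂, t₁, t₂} : Finset V) ⊆ S := by
        intro x hx
        simp only [Finset.mem_insert, Finset.mem_singleton] at hx
        rcases hx with rfl | rfl | rfl | rfl <;> assumption
      have hc : ({s₁, s₂, t₁, t₂} : Finset V).card = 4 := by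
        rw [Finset.card_insert_of_notMem, Finset.card_insert_of_notMem,
          Finset.card_pair ht12]
        · simp only [Finset.mem_insert, Finset.mem_singleton]
          push_neg
          exact ⟨hab s₂ t₁ hs₂A ht₁B, hab s₂ t₂ hs₂A ht₂B⟩
        · simp only [Finset.mem_insert, Finset.mem_singleton]
          push_neg
          exact ⟨hs12, hab s₁ t₁ hs₁A ht₁B, hab s₁ t₂ hs₁A ht₂B⟩
      have h4 : 4 ≤ S.card := hc ▸ Finset.card_le_card hsub
      rw [← hcard]
      exact_mod_cast h4
  · -- adding any missing edge drops gammaT to 2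
    have key : ∀ a b : V, a ∈ A → b ∈ B →
        gammaT (H ⊔ SimpleGraph.fromEdgeSet {s(a, b)}) = 2 := by
      intro a b haA hbB
      set G := H ⊔ SimpleGraph.fromEdgeSet {s(a, b)} with hG
      have hne : a ≠ b := hab a b haA hbB
      have hGab : G.Adj a b := by
        apply Or.inr
        rw [SimpleGraph.fromEdgeSet_adj]
        exact ⟨rfl, hne⟩
      apply le_antisymm
      · apply sInf_le
        refine ⟨{a, b}, ?_, ?_⟩
        · rw [Finset.card_pair hne]; rfl
        · intro v
          rcases hpart v with ⟨hv, _⟩ | ⟨hv, _⟩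
          · rcases eq_or_ne v a with rfl | hva
            · exact ⟨b, by simp, hGab⟩
            · exact ⟨a, by simp, Or.inl ((hadj v a).2 ⟨hva, Or.inl ⟨hv, haA⟩⟩)⟩
          · rcases eq_or_ne v b with rfl | hvb
            · exact ⟨a, by simp, hGab.symm⟩
            · exact ⟨b, by simp, Or.inl ((hadj v b).2 ⟨hvb, Or.inr ⟨hv, hbB⟩⟩)⟩
      · apply le_sInf
        rintro n ⟨S, hcard, hdom⟩
        obtain ⟨x, hxS, _⟩ := hdom a
        obtain ⟨y, hyS, hxy⟩ := hdom x
        have hxyne : x ≠ y := hxy.ne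
        have hsub : ({x, y} : Finset V) ⊆ S := by
          intro z hz
          simp only [Finset.mem_insert, Finset.mem_singleton] at hz
          rcases hz with rfl | rfl <;> assumption
        have h2 : 2 ≤ S.card := by
          have := Finset.card_le_card hsub
          rwa [Finset.card_pair hxyne] at this
        rw [← hcard]
        exact_mod_cast h2
    intro u v huv hnadj
    have hnot : ¬((u ∈ A ∧ v ∈ A) ∨ (u ∈ B ∧ v ∈ B)) := by
      intro h
      exact hnadj ((hadj u v).2 ⟨huv, h⟩)
    rcases hpart u with ⟨huA, _⟩ | ⟨huB, _⟩
    · have hvB : v ∈ B := by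
        rcases hpart v with ⟨hvA, _⟩ | ⟨hvB, _⟩
        · exact absurd (Or.inl ⟨huA, hvA⟩) hnot
        · exact hvB
      exact key u v huA hvB
    · have hvA : v ∈ A := by
        rcases hpart v with ⟨hvA, _⟩ | ⟨hvB, _⟩
        · exact hvA
        · exact absurd (Or.inr ⟨huB, hvB⟩) hnot
      rw [show s(u, v) = s(v, u) from Sym2.eq_swap]
      exact key v u hvA huB
end

section
/- Let G be a graph on n vertices and (A, B) a partition of its vertex set. Suppose there is an injective map f assigning to every missing edge of G that lies within A or within B an edge of G with one endpoint in A and the other in B. Then the number of edges of the complement Gᶜ is at most |A|·|B|, which is at most ⌊n²/4⌋. -/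
/-- If every missing edge within a part of a vertex partition
(A, B) can be injectively associated with a crossing edge, then the number of
missing edges is at most |A|·|B| ≤ ⌊n²/4⌋. -/
theorem stmt5 {V : Type*} [Fintype V] [DecidableEq V] (G : SimpleGraph V)
    (A B : Set V) (hdisj : Disjoint A B) (hcover : A ∪ B = Set.univ)
    (M X : Set (Sym2 V))
    (hM : M = {e | e ∈ Gᶜ.edgeSet ∧ ((∀ x ∈ e, x ∈ A) ∨ (∀ x ∈ e, x ∈ B))})
    (hX : X = {e | e ∈ G.edgeSet ∧ (∃ x ∈ e, x ∈ A) ∧ (∃ y ∈ e, y ∈ B)})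
    (f : Sym2 V → Sym2 V) (hf : ∀ e ∈ M, f e ∈ X) (hinj : Set.InjOn f M) :
    Gᶜ.edgeSet.ncard ≤ A.ncard * B.ncard ∧
      A.ncard * B.ncard ≤ Fintype.card V ^ 2 / 4 := by
  classical
  set C : Set (Sym2 V) := {e | (∃ x ∈ e, x ∈ A) ∧ (∃ y ∈ e, y ∈ B)} with hC
  have hmem : ∀ v : V, v ∈ A ∨ v ∈ B := by
    intro v
    have : v ∈ A ∪ B := by rw [hcover]; trivial
    exact this
  have hAB : ∀ v : V, v ∈ A → v ∈ B → False := fun v ha hb =>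
    Set.disjoint_left.mp hdisj ha hb
  -- C is the image of A ×ˢ B under the quotient map
  have hCimg : C = (fun p : V × V => s(p.1, p.2)) '' (A ×ˢ B) := by
    ext e
    induction e with
    | h x y =>
      simp only [hC, Set.mem_setOf_eq, Sym2.mem_iff, Set.mem_image,
        Set.mem_prod, Prod.exists]
      constructor
      · rintro ⟨⟨a, h1, ha⟩, ⟨b, h2, hb⟩⟩
        rcases h1 with h1 | h1 <;> rcases h2 with h2 | h2
        · exact (hAB a ha (by rw [h1.trans h2.symm]; exact hb)).elim
        · exact ⟨a, b, ⟨ha, hb⟩, by rw [h1, h2]⟩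
        · exact ⟨a, b, ⟨ha, hb⟩, by rw [h1, h2]; exact Sym2.eq_swap⟩
        · exact (hAB a ha (by rw [h1.trans h2.symm]; exact hb)).elim
      · rintro ⟨a, b, ⟨ha, hb⟩, h⟩
        rw [Sym2.eq_iff] at h
        rcases h with ⟨rfl, rfl⟩ | ⟨rfl, rfl⟩
        · exact ⟨⟨a, Or.inl rfl, ha⟩, ⟨b, Or.inr rfl, hb⟩⟩
        · exact ⟨⟨a, Or.inr rfl, ha⟩, ⟨b, Or.inl rfl, hb⟩⟩
  have hCinj : Set.InjOn (fun p : V × V => s(p.1, p.2)) (A ×ˢ B) := by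
    rintro ⟨a, b⟩ ⟨hab1, hab2⟩ ⟨c, d⟩ ⟨hcd1, hcd2⟩ h
    simp only [Sym2.eq_iff] at h
    rcases h with ⟨rfl, rfl⟩ | ⟨h1, h2⟩
    · rfl
    · exact (hAB a hab1 (h1.symm ▸ hcd2)).elim
  have hCcard : C.ncard = A.ncard * B.ncard := by
    rw [hCimg, Set.ncard_image_of_injOn hCinj,
      Set.ncard_eq_toFinset_card', Set.ncard_eq_toFinset_card',
      Set.ncard_eq_toFinset_card', Set.toFinset_prod, Finset.card_product]
  -- complement edges split into M and crossing complement edges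
  have hsub : Gᶜ.edgeSet ⊆ M ∪ (Gᶜ.edgeSet ∩ C) := by
    intro e he
    induction e with
    | h x y =>
      rcases hmem x with hx | hx <;> rcases hmem y with hy | hy
      · left; rw [hM]
        exact ⟨he, Or.inl (by intro z hz; rcases Sym2.mem_iff.mp hz with rfl | rfl <;> assumption)⟩
      · right
        exact ⟨he, ⟨x, Sym2.mem_mk_left _ _, hx⟩, ⟨y, Sym2.mem_mk_right _ _, hy⟩⟩
      · right
        exact ⟨he, ⟨y, Sym2.mem_mk_right _ _, hy⟩, ⟨x, Sym2.mem_mk_left _ _, hx⟩⟩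
      · left; rw [hM]
        exact ⟨he, Or.inr (by intro z hz; rcases Sym2.mem_iff.mp hz with rfl | rfl <;> assumption)⟩
  have hXsub : X ⊆ C := by
    intro e he; rw [hX] at he; exact ⟨he.2.1, he.2.2⟩
  have hdisj2 : Disjoint (f '' M) (Gᶜ.edgeSet ∩ C) := by
    rw [Set.disjoint_left]
    rintro e ⟨m, hm, rfl⟩ ⟨he, _⟩
    have h1 := hf m hm
    rw [hX] at h1
    exact (SimpleGraph.disjoint_edgeSet.mpr disjoint_compl_right).le_bot ⟨h1.1, he⟩
  have key : Gᶜ.edgeSet.ncard ≤ C.ncard := calc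
    Gᶜ.edgeSet.ncard ≤ (M ∪ (Gᶜ.edgeSet ∩ C)).ncard :=
      Set.ncard_le_ncard hsub (Set.toFinite _)
    _ ≤ M.ncard + (Gᶜ.edgeSet ∩ C).ncard := Set.ncard_union_le _ _
    _ = (f '' M).ncard + (Gᶜ.edgeSet ∩ C).ncard := by
        rw [Set.ncard_image_of_injOn hinj]
    _ = ((f '' M) ∪ (Gᶜ.edgeSet ∩ C)).ncard :=
        (Set.ncard_union_eq hdisj2 (Set.toFinite _) (Set.toFinite _)).symm
    _ ≤ C.ncard := by
        apply Set.ncard_le_ncard _ (Set.toFinite _)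
        apply Set.union_subset
        · rintro e ⟨m, hm, rfl⟩; exact hXsub (hf m hm)
        · exact Set.inter_subset_right
  constructor
  · rw [← hCcard]; exact key
  · have hsum : A.ncard + B.ncard = Fintype.card V := by
      rw [← Set.ncard_union_eq hdisj (Set.toFinite _) (Set.toFinite _), hcover,
        Set.ncard_univ, Nat.card_eq_fintype_card]
    rw [Nat.le_div_iff_mul_le (by norm_num), ← hsum]
    zify
    nlinarith [sq_nonneg ((A.ncard : ℤ) - B.ncard)]
end

section
/- If G is a graph of diameter two on at least three vertices with a cut vertex, then γₜ(G) = 2. -/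
/-- G has diameter two. -/
def DiamTwo {V : Type*} (G : SimpleGraph V) : Prop :=
  (∀ u v : V, u ≠ v → G.Adj u v ∨ ∃ w : V, G.Adj u w ∧ G.Adj w v) ∧
    ∃ u v : V, u ≠ v ∧ ¬ G.Adj u v

/-- Removing the vertex set S disconnects G. -/
def RemovalDisconnects {V : Type*} (G : SimpleGraph V) (S : Set V) : Prop :=
  ∃ a b : (Sᶜ : Set V), ¬ (G.induce Sᶜ).Reachable a b

/-- G is 3-γₜ-edge-critical. -/
def Critical3 {V : Type*} [DecidableEq V] (G : SimpleGraph V) : Prop :=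
  gammaT G = 3 ∧
    ∀ u v : V, u ≠ v → ¬ G.Adj u v →
      gammaT (G ⊔ SimpleGraph.fromEdgeSet {s(u, v)}) = 2

/-- A diameter-two graph on at least three vertices with a cut
vertex has total domination number two. -/
theorem stmt8 {V : Type*} [Fintype V] [DecidableEq V] (G : SimpleGraph V)
    (hn : 3 ≤ Fintype.card V) (hconn : G.Connected) (hdiam : DiamTwo G)
    (v : V) (hcut : RemovalDisconnects G {v}) :
    gammaT G = 2 := by
  -- Step 1: v is adjacent to every other vertex.
  have hdom : ∀ u : V, u ≠ v → G.Adj v u := by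
    intro u hu
    by_contra hadj
    obtain ⟨a, b, hab⟩ := hcut
    have hu' : u ∈ ({v}ᶜ : Set V) := by simpa using hu
    -- u reaches every vertex of the punctured graph
    have key : ∀ x : (({v}ᶜ : Set V)), (G.induce ({v}ᶜ : Set V)).Reachable ⟨u, hu'⟩ x := by
      intro ⟨x, hx⟩
      by_cases hxu : x = u
      · subst hxu; exact SimpleGraph.Reachable.refl _
      · rcases hdiam.1 u x (fun h => hxu h.symm) with h | ⟨w, hw1, hw2⟩
        · exact SimpleGraph.Adj.reachable (by simpa using h)
        · have hwv : w ≠ v := by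
            intro h; subst h
            exact hadj hw1.symm
          have hw' : w ∈ ({v}ᶜ : Set V) := by simpa using hwv
          have e1 : (G.induce ({v}ᶜ : Set V)).Adj ⟨u, hu'⟩ ⟨w, hw'⟩ := by simpa using hw1
          have e2 : (G.induce ({v}ᶜ : Set V)).Adj ⟨w, hw'⟩ ⟨x, hx⟩ := by simpa using hw2
          exact (e1.reachable).trans e2.reachable
    exact hab (((key a).symm).trans (key b))
  -- pick a vertex w ≠ v
  obtain ⟨w, hw⟩ : ∃ w : V, w ≠ v := by
    have : 1 < Fintype.card V := by omega
    obtain ⟨w, hw⟩ := Fintype.exists_ne_of_one_lt_card this v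
    exact ⟨w, hw⟩
  have hvw : G.Adj v w := hdom w hw
  apply le_antisymm
  · -- upper bound: {v, w} totally dominates
    apply sInf_le
    refine ⟨{v, w}, ?_, ?_⟩
    · rw [Finset.card_insert_of_notMem (by simpa using hw.symm), Finset.card_singleton]
      rfl
    · intro x
      by_cases hx : x = v
      · exact ⟨w, by simp, by rw [hx]; exact hvw⟩
      · exact ⟨v, by simp, (hdom x hx).symm⟩
  · -- lower bound
    apply le_sInf
    rintro n ⟨S, hcard, hS⟩
    have : Nonempty V := by
      exact Fintype.card_pos_iff.mp (lt_of_lt_of_le (by norm_num) hn)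
    obtain ⟨x⟩ := this
    obtain ⟨s, hs, _⟩ := hS x
    obtain ⟨t, ht, hadj⟩ := hS s
    have hst : s ≠ t := fun h => (G.irrefl (h ▸ hadj))
    have h2 : 2 ≤ S.card := by
      have : ({s, t} : Finset V) ⊆ S := by
        intro y hy
        rcases Finset.mem_insert.mp hy with h | h
        · exact h ▸ hs
        · exact (Finset.mem_singleton.mp h) ▸ ht
      calc 2 = ({s, t} : Finset V).card := by
              rw [Finset.card_insert_of_notMem (by simpa using hst), Finset.card_singleton]
           _ ≤ S.card := Finset.card_le_card this
    rw [← hcard]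
    exact_mod_cast h2
end

section
/- If G is a 3-γₜ-edge-critical graph of diameter two, then G has no cut vertex; i.e., G is 2-connected. -/
/-- A 3-γₜ-edge-critical graph of diameter two has no cut
vertex. -/
theorem stmt9 {V : Type*} [Fintype V] [DecidableEq V] (G : SimpleGraph V)
    (hcrit : Critical3 G) (hconn : G.Connected) (hdiam : DiamTwo G) :
    ∀ v : V, ¬ RemovalDisconnects G {v} := by
  intro v hdis
  obtain ⟨a, b, hab⟩ := hdis
  -- Every vertex other than v is adjacent to v.
  have key : ∀ u : V, u ≠ v → G.Adj u v := by
    intro u hu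
    have hu' : u ∈ (({v} : Set V)ᶜ) := by simp [hu]
    set u' : (({v} : Set V)ᶜ : Set V) := ⟨u, hu'⟩ with hu'def
    -- pick w ∈ {a,b} with u' not reachable to w
    have hw : ∃ w : (({v} : Set V)ᶜ : Set V),
        ¬ (G.induce ({v} : Set V)ᶜ).Reachable u' w := by
      by_cases h1 : (G.induce ({v} : Set V)ᶜ).Reachable u' a
      · refine ⟨b, fun h2 => hab (h1.symm.trans h2)⟩
      · exact ⟨a, h1⟩
    obtain ⟨w, hnr⟩ := hw
    have hne : u ≠ (w : V) := by
      intro h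
      apply hnr
      have : u' = w := Subtype.ext h
      rw [this]
    have hnadj : ¬ G.Adj u (w : V) := by
      intro h
      apply hnr
      exact SimpleGraph.Adj.reachable (by simpa using h)
    rcases hdiam.1 u (w : V) hne with h | ⟨c, huc, hcw⟩
    · exact absurd h hnadj
    · by_cases hc : c = v
      · exact hc ▸ huc
      · exfalso
        apply hnr
        have hc' : c ∈ (({v} : Set V)ᶜ) := by simp [hc]
        have r1 : (G.induce ({v} : Set V)ᶜ).Adj u' ⟨c, hc'⟩ := by simpa using huc
        have r2 : (G.induce ({v} : Set V)ᶜ).Adj ⟨c, hc'⟩ w := by simpa using hcw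
        exact r1.reachable.trans r2.reachable
  -- Then {v, a} is a total dominating set of size 2.
  have hav : (a : V) ≠ v := by
    have h := a.2
    simp only [Set.mem_compl_iff, Set.mem_singleton_iff] at h
    exact h
  have h2 : (2 : ℕ∞) ∈ {n : ℕ∞ | ∃ S : Finset V, (S.card : ℕ∞) = n ∧
      ∀ x : V, ∃ u ∈ S, G.Adj x u} := by
    refine ⟨{v, (a : V)}, ?_, ?_⟩
    · rw [Finset.card_insert_of_notMem (by simp [hav.symm])]
      simp
    · intro x
      by_cases hx : x = v
      · exact ⟨(a : V), by simp, hx ▸ (key a hav).symm⟩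
      · exact ⟨v, by simp, key x hx⟩
  have hle : gammaT G ≤ 2 := sInf_le h2
  rw [hcrit.1] at hle
  norm_num at hle
end

section
/- Let G be a 3-γₜ-edge-critical graph and uv a missing edge of G. Then either {u, v} dominates G, or there exists a vertex z such that uz is an edge, z is nonadjacent to v, and {u, z} dominates all of G except v, or there exists a vertex z such that zv is an edge, z is nonadjacent to u, and {z, v} dominates all of G except u. -/
private lemma key_aux {V : Type*} [DecidableEq V] (G : SimpleGraph V) (u v : V)
    (huv : u ≠ v) (hnadj : ¬ G.Adj u v)
    (hno2 : ∀ T : Finset V, T.card = 2 → ¬ ∀ w : V, ∃ x ∈ T, G.Adj w x)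
    (z : V) (hzu : z ≠ u) (hzv : z ≠ v)
    (hdom : ∀ w : V, ∃ x ∈ ({u, z} : Finset V),
      (G ⊔ SimpleGraph.fromEdgeSet {s(u, v)}).Adj w x) :
    G.Adj u z ∧ ¬ G.Adj z v ∧
      ∀ w : V, w ≠ v → (w = u ∨ w = z ∨ G.Adj u w ∨ G.Adj z w) := by
  have hadj' : ∀ w x : V, (G ⊔ SimpleGraph.fromEdgeSet {s(u, v)}).Adj w x →
      G.Adj w x ∨ (w = u ∧ x = v) ∨ (w = v ∧ x = u) := by
    intro w x h
    rcases h with h | h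
    · exact Or.inl h
    · rw [SimpleGraph.fromEdgeSet_adj, Set.mem_singleton_iff, Sym2.eq_iff] at h
      tauto
  have huz : G.Adj u z := by
    obtain ⟨x, hx, hadj⟩ := hdom z
    simp only [Finset.mem_insert, Finset.mem_singleton] at hx
    rcases hadj' z x hadj with h | ⟨h1, h2⟩ | ⟨h1, h2⟩
    · rcases hx with rfl | rfl
      · exact h.symm
      · exact absurd rfl h.ne
    · exact absurd h1 hzu
    · exact absurd h1 hzv
  have hzvn : ¬ G.Adj z v := by
    intro hzvadj
    apply hno2 {u, z} (by rw [Finset.card_insert_of_notMem (by simpa using hzu.symm)]; simp)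
    intro w
    obtain ⟨x, hx, hadj⟩ := hdom w
    simp only [Finset.mem_insert, Finset.mem_singleton] at hx
    rcases hadj' w x hadj with h | ⟨h1, h2⟩ | ⟨h1, h2⟩
    · exact ⟨x, by simpa using hx, h⟩
    · subst h1 h2
      rcases hx with rfl | rfl
      · exact absurd rfl huv
      · exact absurd rfl hzv
    · subst h1 h2
      exact ⟨z, by simp, hzvadj.symm⟩
  refine ⟨huz, hzvn, fun w hw => ?_⟩
  obtain ⟨x, hx, hadj⟩ := hdom w
  simp only [Finset.mem_insert, Finset.mem_singleton] at hx
  rcases hadj' w x hadj with h | ⟨h1, h2⟩ | ⟨h1, h2⟩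
  · rcases hx with rfl | rfl
    · exact Or.inr (Or.inr (Or.inl h.symm))
    · exact Or.inr (Or.inr (Or.inr h.symm))
  · subst h1 h2
    rcases hx with rfl | rfl
    · exact absurd rfl huv
    · exact absurd rfl hzv
  · exact absurd h1 hw


/-- For a missing edge uv of a 3-γₜ-edge-critical graph, either
{u,v} dominates G, or some uz → v, or some zv → u. -/
theorem stmt10 {V : Type*} [DecidableEq V] (G : SimpleGraph V)
    (hcrit : Critical3 G) (u v : V) (huv : u ≠ v) (hnadj : ¬ G.Adj u v) :
    (∀ w : V, w = u ∨ w = v ∨ G.Adj u w ∨ G.Adj v w) ∨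
      (∃ z : V, G.Adj u z ∧ ¬ G.Adj z v ∧
        ∀ w : V, w ≠ v → (w = u ∨ w = z ∨ G.Adj u w ∨ G.Adj z w)) ∨
      (∃ z : V, G.Adj z v ∧ ¬ G.Adj z u ∧
        ∀ w : V, w ≠ u → (w = z ∨ w = v ∨ G.Adj z w ∨ G.Adj v w)) := by

  obtain ⟨h3, hc⟩ := hcrit
  have h2 := hc u v huv hnadj
  set G' := G ⊔ SimpleGraph.fromEdgeSet {s(u, v)} with hG'
  -- no 2-element set totally dominates G
  have hno2 : ∀ T : Finset V, T.card = 2 → ¬ ∀ w : V, ∃ x ∈ T, G.Adj w x := by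
    intro T hT hdomT
    have hle : gammaT G ≤ (T.card : ℕ∞) := sInf_le ⟨T, rfl, hdomT⟩
    rw [h3, hT] at hle
    norm_num at hle
  -- the set defining gammaT G' is nonempty
  have hne : {n : ℕ∞ | ∃ S : Finset V, (S.card : ℕ∞) = n ∧
      ∀ w : V, ∃ x ∈ S, G'.Adj w x}.Nonempty := by
    by_contra h
    rw [Set.not_nonempty_iff_eq_empty] at h
    rw [gammaT, h, sInf_empty] at h2
    exact (by norm_num : (⊤ : ℕ∞) ≠ 2) h2
  have hmem : (2 : ℕ∞) ∈ {n : ℕ∞ | ∃ S : Finset V, (S.card : ℕ∞) = n ∧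
      ∀ w : V, ∃ x ∈ S, G'.Adj w x} := h2 ▸ csInf_mem hne
  obtain ⟨S, hScard, hdom⟩ := hmem
  have hScard2 : S.card = 2 := by exact_mod_cast hScard
  obtain ⟨a, b, hab, rfl⟩ := Finset.card_eq_two.mp hScard2
  -- S must contain u or v
  have hcase : u ∈ ({a, b} : Finset V) ∨ v ∈ ({a, b} : Finset V) := by
    by_contra h
    push_neg at h
    obtain ⟨hu, hv⟩ := h
    apply hno2 {a, b} hScard2
    intro w
    obtain ⟨x, hx, hadj⟩ := hdom w
    refine ⟨x, hx, ?_⟩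
    rcases hadj with hadj | hadj
    · exact hadj
    · rw [SimpleGraph.fromEdgeSet_adj, Set.mem_singleton_iff, Sym2.eq_iff] at hadj
      exfalso
      rcases hadj.1 with ⟨_, rfl⟩ | ⟨_, rfl⟩
      · exact hv hx
      · exact hu hx
  -- helper to rewrite {a,b} as {c, other}
  have hpair : ∀ c : V, c ∈ ({a, b} : Finset V) →
      ∃ z : V, ({a, b} : Finset V) = {c, z} ∧ z ≠ c := by
    intro c hc
    simp only [Finset.mem_insert, Finset.mem_singleton] at hc
    rcases hc with rfl | rfl
    · exact ⟨b, rfl, hab.symm⟩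
    · exact ⟨a, by rw [Finset.pair_comm], hab⟩
  rcases hcase with hu | hv
  · obtain ⟨z, hSz, hzu⟩ := hpair u hu
    rw [hSz] at hdom
    by_cases hzv : z = v
    · -- S = {u, v} : first disjunct
      rw [hzv] at hdom
      left
      intro w
      by_cases hwu : w = u
      · exact Or.inl hwu
      by_cases hwv : w = v
      · exact Or.inr (Or.inl hwv)
      obtain ⟨x, hx, hadj⟩ := hdom w
      simp only [Finset.mem_insert, Finset.mem_singleton] at hx
      have hGadj : G.Adj w x := by
        rcases hadj with h | h
        · exact h
        · rw [SimpleGraph.fromEdgeSet_adj, Set.mem_singleton_iff, Sym2.eq_iff] at h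
          exfalso
          rcases h.1 with ⟨rfl, _⟩ | ⟨rfl, _⟩
          · exact hwu rfl
          · exact hwv rfl
      rcases hx with rfl | rfl
      · exact Or.inr (Or.inr (Or.inl hGadj.symm))
      · exact Or.inr (Or.inr (Or.inr hGadj.symm))
    · -- S = {u, z}, z ≠ v : second disjunct
      right; left
      exact ⟨z, key_aux G u v huv hnadj hno2 z hzu hzv hdom⟩
  · obtain ⟨z, hSz, hzv⟩ := hpair v hv
    rw [hSz] at hdom
    by_cases hzu : z = u
    · -- S = {v, u} : first disjunct
      rw [hzu] at hdom
      left
      intro w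
      by_cases hwu : w = u
      · exact Or.inl hwu
      by_cases hwv : w = v
      · exact Or.inr (Or.inl hwv)
      obtain ⟨x, hx, hadj⟩ := hdom w
      simp only [Finset.mem_insert, Finset.mem_singleton] at hx
      have hGadj : G.Adj w x := by
        rcases hadj with h | h
        · exact h
        · rw [SimpleGraph.fromEdgeSet_adj, Set.mem_singleton_iff, Sym2.eq_iff] at h
          exfalso
          rcases h.1 with ⟨rfl, _⟩ | ⟨rfl, _⟩
          · exact hwu rfl
          · exact hwv rfl
      rcases hx with rfl | rfl
      · exact Or.inr (Or.inr (Or.inr hGadj.symm))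
      · exact Or.inr (Or.inr (Or.inl hGadj.symm))
    · -- S = {v, z}, z ≠ u : third disjunct
      right; right
      have hnadj' : ¬ G.Adj v u := fun h => hnadj h.symm
      have hdom' : ∀ w : V, ∃ x ∈ ({v, z} : Finset V),
          (G ⊔ SimpleGraph.fromEdgeSet {s(v, u)}).Adj w x := by
        rw [Sym2.eq_swap]
        exact hdom
      obtain ⟨h1, h2', h3'⟩ := key_aux G v u huv.symm hnadj' hno2 z hzv hzu hdom'
      refine ⟨z, h1.symm, h2', fun w hw => ?_⟩
      rcases h3' w hw with h | h | h | h
      · exact Or.inr (Or.inl h)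
      · exact Or.inl h
      · exact Or.inr (Or.inr (Or.inr h))
      · exact Or.inr (Or.inr (Or.inl h))
end

section
/- Let G be a 3-γₜ-edge-critical graph, let {x, y} be a vertex cut of G of size two, and suppose G has diameter two. Then x and y are nonadjacent. -/
/-- In a 3-γₜ-edge-critical graph of diameter two, the two
vertices of a two-vertex cut are nonadjacent. -/
theorem stmt11 {V : Type*} [DecidableEq V] (G : SimpleGraph V)
    (hcrit : Critical3 G) (hconn : G.Connected) (hdiam : DiamTwo G)
    (x y : V) (hxy : x ≠ y) (hcut : RemovalDisconnects G {x, y}) :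
    ¬ G.Adj x y := by
  intro hadj
  obtain ⟨a, b, hnab⟩ := hcut
  -- {x,y} is a total dominating set
  have hdom : ∀ v : V, ∃ u ∈ ({x, y} : Finset V), G.Adj v u := by
    intro v
    by_cases hvx : v = x
    · exact ⟨y, by simp, hvx ▸ hadj⟩
    by_cases hvy : v = y
    · exact ⟨x, by simp, hvy ▸ hadj.symm⟩
    have hvmem : v ∈ ({x, y} : Set V)ᶜ := by simp [hvx, hvy]
    set vv : (({x, y} : Set V)ᶜ : Set V) := ⟨v, hvmem⟩ with hvv
    have hkey : ∃ w : (({x, y} : Set V)ᶜ : Set V),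
        ¬ (G.induce ({x, y} : Set V)ᶜ).Reachable vv w := by
      by_contra h
      push_neg at h
      exact hnab ((h a).symm.trans (h b))
    obtain ⟨w, hw⟩ := hkey
    have hvw : v ≠ (w : V) := by
      intro h
      apply hw
      have : vv = w := Subtype.ext h
      rw [this]
    have hnadj : ¬ G.Adj v (w : V) := by
      intro h
      exact hw (SimpleGraph.Adj.reachable (by exact h))
    obtain hadj' | ⟨u, hu1, hu2⟩ := hdiam.1 v w hvw
    · exact absurd hadj' hnadj
    · by_cases hum : u ∈ ({x, y} : Set V)
      · refine ⟨u, ?_, hu1⟩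
        simpa using hum
      · exfalso
        apply hw
        have h1 : (G.induce ({x, y} : Set V)ᶜ).Adj vv ⟨u, hum⟩ := hu1
        have h2 : (G.induce ({x, y} : Set V)ᶜ).Adj ⟨u, hum⟩ w := hu2
        exact (h1.reachable).trans h2.reachable
  have hmem : (2 : ℕ∞) ∈ {n : ℕ∞ | ∃ S : Finset V,
      (S.card : ℕ∞) = n ∧ ∀ v : V, ∃ u ∈ S, G.Adj v u} := by
    refine ⟨{x, y}, ?_, hdom⟩
    rw [Finset.card_insert_of_notMem (by simpa using hxy), Finset.card_singleton]
    rfl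
  have hle : gammaT G ≤ 2 := sInf_le hmem
  rw [hcrit.1] at hle
  norm_num at hle
end

section
/- Let G be a graph of diameter two and {x, y} a vertex cut of G of size two. Then {x, y} dominates G: every vertex of G − {x,y} is adjacent to x or to y. -/
/-- In a connected diameter-two graph, a two-vertex cut {x,y}
dominates the graph. -/
theorem stmt12 {V : Type*} (G : SimpleGraph V) (hconn : G.Connected)
    (hdiam : DiamTwo G) (x y : V) (hxy : x ≠ y)
    (hcut : RemovalDisconnects G {x, y}) :
    ∀ u : V, u ∉ ({x, y} : Set V) → G.Adj x u ∨ G.Adj y u := by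
  intro u hu
  by_contra h
  push_neg at h
  obtain ⟨hx, hy⟩ := h
  obtain ⟨a, b, hab⟩ := hcut
  have hu' : u ∈ (({x, y} : Set V)ᶜ : Set V) := hu
  have key : ∀ v : ((({x, y} : Set V)ᶜ : Set V)),
      (G.induce (({x, y} : Set V)ᶜ)).Reachable ⟨u, hu'⟩ v := by
    intro v
    by_cases hv : u = v.val
    · have : (⟨u, hu'⟩ : (({x, y} : Set V)ᶜ : Set V)) = v := Subtype.ext hv
      rw [this]
    · rcases hdiam.1 u v.val hv with hadj | ⟨w, hw1, hw2⟩
      · exact SimpleGraph.Adj.reachable (by simpa using hadj)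
      · have hw : w ∈ (({x, y} : Set V)ᶜ : Set V) := by
          intro hmem
          rcases hmem with rfl | rfl
          · exact hx hw1.symm
          · exact hy hw1.symm
        have r1 : (G.induce (({x, y} : Set V)ᶜ)).Adj ⟨u, hu'⟩ ⟨w, hw⟩ := by simpa using hw1
        have r2 : (G.induce (({x, y} : Set V)ᶜ)).Adj ⟨w, hw⟩ v := by simpa using hw2
        exact r1.reachable.trans r2.reachable
  exact hab ((key a).symm.trans (key b))
end

section
/- Let G be a graph of diameter two, {x,y} a two-vertex cut of G, and call a vertex of G − {x,y} strong if it is adjacent to both x and y. Then any two strong vertices lying in the same connected component of G − {x,y} need not be adjacent in general, but if additionally G is 3-γₜ-edge-critical and G − {x,y} has at least two components, then any two strong vertices in the same component of G − {x,y} are adjacent. -/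
lemma auxkey {V : Type*} [DecidableEq V] (G : SimpleGraph V)
    (x y v v' : V)
    (hv : v ∈ (({x, y} : Set V)ᶜ)) (hv' : v' ∈ (({x, y} : Set V)ᶜ))
    (hne : v ≠ v')
    (hxv : G.Adj x v) (hyv : G.Adj y v)
    (hreach : (G.induce (({x, y} : Set V)ᶜ)).Reachable ⟨v, hv⟩ ⟨v', hv'⟩)
    (w : V) (hw : w ∈ (({x, y} : Set V)ᶜ))
    (hwreach : ¬ (G.induce (({x, y} : Set V)ᶜ)).Reachable ⟨v, hv⟩ ⟨w, hw⟩)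
    (S : Finset V) (hcard : S.card ≤ 2)
    (hTDS : ∀ z : V, ∃ u ∈ S, (G ⊔ SimpleGraph.fromEdgeSet {s(v, v')}).Adj z u)
    (hv'S : v' ∈ S)
    (hzfail : ∀ u ∈ S, ¬ G.Adj v u) : False := by
  have hiadj : ∀ (a b : V) (ha : a ∈ (({x, y} : Set V)ᶜ)) (hb : b ∈ (({x, y} : Set V)ᶜ)),
      G.Adj a b → (G.induce (({x, y} : Set V)ᶜ)).Adj ⟨a, ha⟩ ⟨b, hb⟩ := by
    intro a b ha hb h
    simpa [SimpleGraph.comap_adj] using h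
  have hG' : ∀ a b : V, (G ⊔ SimpleGraph.fromEdgeSet {s(v, v')}).Adj a b ↔
      G.Adj a b ∨ (s(a, b) = s(v, v') ∧ a ≠ b) := by
    intro a b
    simp [SimpleGraph.fromEdgeSet_adj]
  have hwv : w ≠ v := by
    rintro rfl
    exact hwreach (SimpleGraph.Reachable.refl _)
  have hwv' : w ≠ v' := by
    rintro rfl
    exact hwreach (by simpa using hreach)
  obtain ⟨u', hu'S, hadj⟩ := hTDS w
  have hGwu' : G.Adj w u' := by
    rcases (hG' w u').mp hadj with h | ⟨h, _⟩
    · exact h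
    · rw [Sym2.eq_iff] at h
      rcases h with ⟨h1, _⟩ | ⟨h1, _⟩
      · exact absurd h1 hwv
      · exact absurd h1 hwv'
  by_cases hu'xy : u' ∈ ({x, y} : Set V)
  · rcases hu'xy with rfl | rfl
    · exact hzfail u' hu'S hxv.symm
    · exact hzfail u' hu'S hyv.symm
  · have hu'c : u' ∈ (({x, y} : Set V)ᶜ) := hu'xy
    have hru' : (G.induce (({x, y} : Set V)ᶜ)).Reachable ⟨w, hw⟩ ⟨u', hu'c⟩ :=
      (hiadj w u' hw hu'c hGwu').reachable
    have hu'v : u' ≠ v := by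
      rintro rfl
      exact hwreach ((hiadj w u' hw hu'c hGwu').reachable.symm)
    have hu'v' : u' ≠ v' := by
      rintro rfl
      exact hwreach (hreach.trans ((hiadj w u' hw hu'c hGwu').reachable.symm))
    -- S = {v', u'}
    have hsub : ({v', u'} : Finset V) ⊆ S := by
      intro s hs
      rcases Finset.mem_insert.mp hs with rfl | hs
      · exact hv'S
      · rwa [Finset.mem_singleton.mp hs]
    have hSc : S = ({v', u'} : Finset V) := by
      refine (Finset.eq_of_subset_of_card_le hsub ?_).symm
      rw [Finset.card_insert_of_notMem (by simpa using (Ne.symm hu'v')),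
        Finset.card_singleton]
      exact hcard
    obtain ⟨u'', hu''S, hadj2⟩ := hTDS v'
    rw [hSc] at hu''S
    rcases Finset.mem_insert.mp hu''S with h1 | hu''
    · exact (G ⊔ SimpleGraph.fromEdgeSet {s(v, v')}).irrefl (h1 ▸ hadj2)
    · rw [Finset.mem_singleton] at hu''
      rw [hu''] at hadj2
      have hGv'u' : G.Adj v' u' := by
        rcases (hG' v' u').mp hadj2 with h | ⟨h, _⟩
        · exact h
        · rw [Sym2.eq_iff] at h
          rcases h with ⟨h1, _⟩ | ⟨_, h2⟩
          · exact absurd h1.symm hne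
          · exact absurd h2 hu'v
      exact hwreach ((hreach.trans (hiadj v' u' hv' hu'c hGv'u').reachable).trans hru'.symm)

/-- In a 3-γₜ-edge-critical diameter-two graph with a
two-vertex cut {x,y}, any two strong vertices (adjacent to both x and y)
lying in the same component of G - {x,y} are adjacent. -/
theorem stmt13 {V : Type*} [DecidableEq V] (G : SimpleGraph V)
    (hcrit : Critical3 G) (hconn : G.Connected) (hdiam : DiamTwo G)
    (x y : V) (hxy : x ≠ y) (hcut : RemovalDisconnects G {x, y}) :
    ∀ (v v' : V) (hv : v ∈ (({x, y} : Set V)ᶜ)) (hv' : v' ∈ (({x, y} : Set V)ᶜ)),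
      v ≠ v' →
      G.Adj x v → G.Adj y v → G.Adj x v' → G.Adj y v' →
      (G.induce (({x, y} : Set V)ᶜ)).Reachable ⟨v, hv⟩ ⟨v', hv'⟩ →
      G.Adj v v' := by
  
  intro v v' hv hv' hne hxv hyv hxv' hyv' hreach
  by_contra hadjvv'
  have h2 := hcrit.2 v v' hne hadjvv'
  set T : Set ℕ∞ := {n : ℕ∞ | ∃ S : Finset V, (S.card : ℕ∞) = n ∧
    ∀ z : V, ∃ u ∈ S, (G ⊔ SimpleGraph.fromEdgeSet {s(v, v')}).Adj z u} with hT
  have hTne : T.Nonempty := by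
    by_contra hemp
    rw [Set.not_nonempty_iff_eq_empty] at hemp
    rw [gammaT, ← hT, hemp, sInf_empty] at h2
    exact (by decide : ¬ ((⊤ : ℕ∞) = 2)) h2
  obtain ⟨m, hmT, hmin⟩ := (wellFounded_lt (α := ℕ∞)).has_min T hTne
  have hm2 : m = 2 := by
    have h1 : m ≤ sInf T := le_sInf fun n hn => not_lt.mp (hmin n hn)
    have h2' : sInf T ≤ m := sInf_le hmT
    rw [gammaT, ← hT] at h2
    exact le_antisymm (h2 ▸ h1) (h2 ▸ h2')
  rw [hm2] at hmT
  obtain ⟨S, hScard, hTDS⟩ := hmT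
  have hcard : S.card ≤ 2 := by
    have : (S.card : ℕ∞) ≤ 2 := le_of_eq hScard
    exact_mod_cast this
  -- S is not a total dominating set of G
  have hnot : ¬ ∀ z : V, ∃ u ∈ S, G.Adj z u := by
    intro h
    have hmem : (2 : ℕ∞) ∈ {n : ℕ∞ | ∃ S : Finset V, (S.card : ℕ∞) = n ∧
        ∀ z : V, ∃ u ∈ S, G.Adj z u} := ⟨S, hScard, h⟩
    have hle : gammaT G ≤ 2 := sInf_le hmem
    rw [hcrit.1] at hle
    exact (by decide : ¬ ((3 : ℕ∞) ≤ 2)) hle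
  push_neg at hnot
  obtain ⟨z, hz⟩ := hnot
  obtain ⟨u, huS, hadju⟩ := hTDS z
  have hedge : s(z, u) = s(v, v') := by
    rcases (SimpleGraph.sup_adj _ _ _ _).mp hadju with h | h
    · exact absurd h (hz u huS)
    · exact ((SimpleGraph.fromEdgeSet_adj _).mp h).1
  -- find w not reachable from v (and hence v')
  obtain ⟨a, b, hab⟩ := hcut
  have hwex : ∃ (w : V) (hw : w ∈ (({x, y} : Set V)ᶜ)),
      ¬ (G.induce (({x, y} : Set V)ᶜ)).Reachable ⟨v, hv⟩ ⟨w, hw⟩ := by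
    by_cases hra : (G.induce (({x, y} : Set V)ᶜ)).Reachable ⟨v, hv⟩ a
    · refine ⟨b.1, b.2, fun hrb => hab ?_⟩
      exact hra.symm.trans (by simpa using hrb)
    · exact ⟨a.1, a.2, fun h => hra (by simpa using h)⟩
  obtain ⟨w, hw, hwreach⟩ := hwex
  rw [Sym2.eq_iff] at hedge
  rcases hedge with ⟨rfl, rfl⟩ | ⟨rfl, rfl⟩
  · exact auxkey G x y z u hv hv' hne hxv hyv hreach w hw hwreach S hcard hTDS huS hz
  · have hreach' := hreach.symm
    have hwreach' : ¬ (G.induce (({x, y} : Set V)ᶜ)).Reachable ⟨z, hv'⟩ ⟨w, hw⟩ :=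
      fun h => hwreach (hreach.trans h)
    have hTDS' : ∀ t : V, ∃ u' ∈ S, (G ⊔ SimpleGraph.fromEdgeSet {s(z, u)}).Adj t u' := by
      intro t
      obtain ⟨u', h1, h2⟩ := hTDS t
      refine ⟨u', h1, ?_⟩
      rwa [Sym2.eq_swap (a := z) (b := u)]
    exact auxkey G x y z u hv' hv hne.symm hxv' hyv' hreach' w hw hwreach' S hcard hTDS' huS hz
end

section
/- Let G be a 3-γₜ-edge-critical graph of diameter two with a vertex cut {x, y, z} of size three, and suppose every vertex of {x,y,z} having a non-neighbor in one component of G − {x,y,z} dominates every other component. If v and v' are two vertices in the same component of G − {x,y,z} that are each adjacent to all of x, y, z, then v and v' are adjacent. -/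
lemma gammaT_two_exists {V : Type*} (G : SimpleGraph V) (h : gammaT G = 2) :
    ∃ S : Finset V, S.card = 2 ∧ ∀ v : V, ∃ u ∈ S, G.Adj v u := by
  have hne : {n : ℕ∞ | ∃ S : Finset V, (S.card : ℕ∞) = n ∧
      ∀ v : V, ∃ u ∈ S, G.Adj v u}.Nonempty := by
    by_contra h'
    rw [Set.not_nonempty_iff_eq_empty] at h'
    rw [gammaT, h', sInf_empty] at h
    exact (by simp : (⊤ : ℕ∞) ≠ 2) h
  have hm := csInf_mem hne
  rw [gammaT] at h
  rw [h] at hm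
  obtain ⟨S, hcard, hdomS⟩ := hm
  exact ⟨S, by exact_mod_cast hcard, hdomS⟩

lemma aux_reach {V : Type*} (G : SimpleGraph V) (K : Set V) {p q : V}
    (hp : p ∈ Kᶜ) (hq : q ∈ Kᶜ) (h : G.Adj p q) :
    (G.induce Kᶜ).Reachable ⟨p, hp⟩ ⟨q, hq⟩ := by
  exact SimpleGraph.Adj.reachable (by simpa using h)

lemma aux14 {V : Type*} [DecidableEq V] (G : SimpleGraph V) (K : Set V)
    (v v' c : V) (hv : v ∈ Kᶜ) (hv' : v' ∈ Kᶜ) (hc : c ∈ Kᶜ)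
    (hne : v ≠ v')
    (hKv : ∀ s ∈ K, G.Adj v s)
    (hcv : ¬ (G.induce Kᶜ).Reachable ⟨v, hv⟩ ⟨c, hc⟩)
    (hcv' : ¬ (G.induce Kᶜ).Reachable ⟨v', hv'⟩ ⟨c, hc⟩)
    (S : Finset V) (hS : S.card = 2) (hv'S : v' ∈ S)
    (hvnon : ∀ u ∈ S, ¬ G.Adj v u)
    (hdomS : ∀ w : V, ∃ u ∈ S, G.Adj w u ∨ s(w, u) = s(v, v')) : False := by
  -- S = {v', b} for some b ≠ v'
  obtain ⟨a, b, hab, hSeq⟩ := Finset.card_eq_two.mp hS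
  subst hSeq
  obtain ⟨b0, hb0ne, hSeq⟩ : ∃ b0, b0 ≠ v' ∧ ({a, b} : Finset V) = {v', b0} := by
    rcases Finset.mem_insert.mp hv'S with h | h
    · exact ⟨b, fun hh => hab (h ▸ hh ▸ rfl), by rw [h]⟩
    · rw [Finset.mem_singleton] at h
      exact ⟨a, fun hh => hab (h ▸ hh ▸ rfl), by rw [Finset.pair_comm, h]⟩
  rw [hSeq] at hv'S hvnon hdomS
  -- c is distinct from v and v'
  have hcnev : c ≠ v := by
    intro h; exact hcv (by subst h; exact SimpleGraph.Reachable.refl _)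
  have hcnev' : c ≠ v' := by
    intro h; exact hcv' (by subst h; exact SimpleGraph.Reachable.refl _)
  -- b0 is not in the cut K
  have hb0K : b0 ∈ Kᶜ := by
    by_contra h
    rw [Set.notMem_compl_iff] at h
    exact hvnon b0 (by simp) (hKv b0 h)
  -- c is dominated, and its dominator must be b0
  obtain ⟨u, huS, hu⟩ := hdomS c
  have hadjcb : G.Adj c b0 := by
    rcases hu with hadj | hsym
    · rcases Finset.mem_insert.mp huS with h | h
      · rw [h] at hadj
        exact absurd (aux_reach G K hc hv' hadj).symm hcv'
      · rw [Finset.mem_singleton] at h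
        rw [h] at hadj; exact hadj
    · rcases Sym2.eq_iff.mp hsym with ⟨h1, _⟩ | ⟨h1, _⟩
      · exact absurd h1 hcnev
      · exact absurd h1 hcnev'
  have hb0nev : b0 ≠ v := by
    intro h
    subst h
    exact hcv (aux_reach G K hc hv hadjcb).symm
  -- v' is dominated, and its dominator must be b0
  obtain ⟨u', hu'S, hu'⟩ := hdomS v'
  have hadjv'b : G.Adj v' b0 := by
    rcases hu' with hadj | hsym
    · rcases Finset.mem_insert.mp hu'S with h | h
      · rw [h] at hadj; exact absurd hadj (G.loopless.irrefl v')
      · rw [Finset.mem_singleton] at h; rw [h] at hadj; exact hadj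
    · rcases Finset.mem_insert.mp hu'S with h | h
      · rw [h] at hsym
        rcases Sym2.eq_iff.mp hsym with ⟨h1, _⟩ | ⟨_, h2⟩
        · exact absurd h1.symm hne
        · exact absurd h2.symm hne
      · rw [Finset.mem_singleton] at h; rw [h] at hsym
        rcases Sym2.eq_iff.mp hsym with ⟨h1, h2⟩ | ⟨h1, h2⟩
        · exact absurd h1.symm hne
        · exact absurd h2 hb0nev
  exact hcv' ((aux_reach G K hv' hb0K hadjv'b).trans
    (aux_reach G K hb0K hc hadjcb.symm))

/-- In a 3-γₜ-edge-critical diameter-two graph with a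
three-vertex cut {x,y,z} such that every vertex of {x,y,z} with a
non-neighbor in one component dominates every other component, any two
vertices of a common component of G - {x,y,z} each adjacent to all of
x, y, z are adjacent. -/
theorem stmt14 {V : Type*} [DecidableEq V] (G : SimpleGraph V)
    (hcrit : Critical3 G) (hconn : G.Connected) (hdiam : DiamTwo G)
    (x y z : V) (hxy : x ≠ y) (hxz : x ≠ z) (hyz : y ≠ z)
    (hcut : RemovalDisconnects G {x, y, z})
    (hdom : ∀ s ∈ ({x, y, z} : Set V),
      ∀ (a : V) (ha : a ∈ (({x, y, z} : Set V)ᶜ)), ¬ G.Adj s a →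
      ∀ (b : V) (hb : b ∈ (({x, y, z} : Set V)ᶜ)),
        ¬ (G.induce (({x, y, z} : Set V)ᶜ)).Reachable ⟨a, ha⟩ ⟨b, hb⟩ →
        G.Adj s b) :
    ∀ (v v' : V) (hv : v ∈ (({x, y, z} : Set V)ᶜ))
      (hv' : v' ∈ (({x, y, z} : Set V)ᶜ)), v ≠ v' →
      G.Adj v x → G.Adj v y → G.Adj v z →
      G.Adj v' x → G.Adj v' y → G.Adj v' z →
      (G.induce (({x, y, z} : Set V)ᶜ)).Reachable ⟨v, hv⟩ ⟨v', hv'⟩ →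
      G.Adj v v' := by
  intro v v' hv hv' hne hvx hvy hvz hv'x hv'y hv'z hreach
  by_contra hadj
  set K : Set V := {x, y, z} with hK
  -- From criticality, get a 2-element total dominating set of G + vv'
  have h2 := hcrit.2 v v' hne hadj
  obtain ⟨S, hScard, hSdom⟩ := gammaT_two_exists _ h2
  -- No 2-element set totally dominates G itself
  have hG2 : ¬ ∀ w : V, ∃ u ∈ S, G.Adj w u := by
    intro hdomG
    have h3 : gammaT G ≤ 2 := by
      refine sInf_le ⟨S, ?_, hdomG⟩
      exact_mod_cast hScard
    rw [hcrit.1] at h3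
    exact absurd h3 (by norm_num)
  -- simplify the domination condition of S
  have hSdom' : ∀ w : V, ∃ u ∈ S, G.Adj w u ∨ s(w, u) = s(v, v') := by
    intro w
    obtain ⟨u, huS, hu⟩ := hSdom w
    rw [SimpleGraph.sup_adj] at hu
    rcases hu with h | h
    · exact ⟨u, huS, Or.inl h⟩
    · rw [SimpleGraph.fromEdgeSet_adj] at h
      exact ⟨u, huS, Or.inr (Set.mem_singleton_iff.mp h.1)⟩
  -- find a vertex w with no G-neighbor in S
  push_neg at hG2
  obtain ⟨w, hw⟩ := hG2
  obtain ⟨u, huS, hu⟩ := hSdom w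
  have hwu : (w = v ∧ u = v') ∨ (w = v' ∧ u = v) := by
    rw [SimpleGraph.sup_adj] at hu
    rcases hu with h | h
    · exact absurd h (hw u huS)
    · rw [SimpleGraph.fromEdgeSet_adj] at h
      exact Sym2.eq_iff.mp (Set.mem_singleton_iff.mp h.1)
  -- get a vertex c in a component different from that of v (and v')
  obtain ⟨⟨a0, ha0⟩, ⟨b0, hb0⟩, hab0⟩ := hcut
  obtain ⟨c, hc, hcv⟩ : ∃ (c : V) (hc : c ∈ Kᶜ),
      ¬ (G.induce Kᶜ).Reachable ⟨v, hv⟩ ⟨c, hc⟩ := by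
    by_cases h1 : (G.induce Kᶜ).Reachable ⟨v, hv⟩ ⟨a0, ha0⟩
    · by_cases h2' : (G.induce Kᶜ).Reachable ⟨v, hv⟩ ⟨b0, hb0⟩
      · exact absurd (h1.symm.trans h2') hab0
      · exact ⟨b0, hb0, h2'⟩
    · exact ⟨a0, ha0, h1⟩
  have hcv' : ¬ (G.induce Kᶜ).Reachable ⟨v', hv'⟩ ⟨c, hc⟩ :=
    fun h => hcv (hreach.trans h)
  have hKv : ∀ s ∈ K, G.Adj v s := by
    intro s hs
    simp only [hK, Set.mem_insert_iff, Set.mem_singleton_iff] at hs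
    rcases hs with h | h | h <;> rw [h] <;> assumption
  have hKv' : ∀ s ∈ K, G.Adj v' s := by
    intro s hs
    simp only [hK, Set.mem_insert_iff, Set.mem_singleton_iff] at hs
    rcases hs with h | h | h <;> rw [h] <;> assumption
  rcases hwu with ⟨hwv, huv'⟩ | ⟨hwv', huv⟩
  · rw [hwv] at hw; rw [huv'] at huS
    exact aux14 G K v v' c hv hv' hc hne hKv hcv hcv' S hScard huS hw hSdom'
  · rw [hwv'] at hw; rw [huv] at huS
    refine aux14 G K v' v c hv' hv hc hne.symm hKv' hcv' hcv S hScard huS hw ?_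
    intro w0
    obtain ⟨u0, hu0S, hu0⟩ := hSdom' w0
    refine ⟨u0, hu0S, ?_⟩
    rcases hu0 with h | h
    · exact Or.inl h
    · exact Or.inr (by rw [h, Sym2.eq_swap])
end

section
/- If G is a 3-γₜ-edge-critical graph on n vertices whose complement has at least ⌊n²/4⌋ edges and which has a vertex partition (A,B) such that every missing edge within A or within B has a unique quasi-edge in [A,B] and every edge in [A,B] is the quasi-edge of some missing edge, then the graph on A formed by the missing edges within A is bipartite. -/
/-- `uv` is a missing edge lying within A or within B. -/
def MissingWithin {V : Type*} (G : SimpleGraph V) (A B : Set V) (u v : V) : Prop :=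
  u ≠ v ∧ ¬ G.Adj u v ∧ ((u ∈ A ∧ v ∈ A) ∨ (u ∈ B ∧ v ∈ B))

/-- `e` is an edge of G crossing the partition (A, B). -/
def Crossing {V : Type*} (G : SimpleGraph V) (A B : Set V) (e : Sym2 V) : Prop :=
  e ∈ G.edgeSet ∧ (∃ x ∈ e, x ∈ A) ∧ (∃ y ∈ e, y ∈ B)

/-- `e` is a quasi-edge of the missing edge `uv`: an edge of G containing an
endpoint of `uv` whose two endpoints dominate `G + uv`. -/
def QuasiOf {V : Type*} [DecidableEq V] (G : SimpleGraph V) (u v : V)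
    (e : Sym2 V) : Prop :=
  ∃ p q : V, e = s(p, q) ∧ G.Adj p q ∧ (p = u ∨ p = v ∨ q = u ∨ q = v) ∧
    ∀ w : V, w = p ∨ w = q ∨
      (G ⊔ SimpleGraph.fromEdgeSet {s(u, v)}).Adj p w ∨
      (G ⊔ SimpleGraph.fromEdgeSet {s(u, v)}).Adj q w

lemma quasiOf_congr {V : Type*} [DecidableEq V] {G : SimpleGraph V} {u v u' v' : V}
    (h : s(u, v) = s(u', v')) {e : Sym2 V} (hq : QuasiOf G u v e) :
    QuasiOf G u' v' e := by
  rcases Sym2.eq_iff.mp h with ⟨rfl, rfl⟩ | ⟨rfl, rfl⟩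
  · exact hq
  · obtain ⟨p, q, he, hadj, hmem, hdom⟩ := hq
    refine ⟨p, q, he, hadj, by tauto, ?_⟩
    rw [show s(v, u) = s(u, v) from Sym2.eq_swap]
    exact hdom

lemma force {V : Type*} [DecidableEq V] {G : SimpleGraph V} {A B : Set V}
    (hdisj : Disjoint A B)
    (hsurj : ∀ e : Sym2 V, Crossing G A B e →
      ∃ u v : V, MissingWithin G A B u v ∧ QuasiOf G u v e)
    {a c w : V} (ha : a ∈ A) (hc : c ∈ B) (hac : G.Adj a c) (hw : w ∈ A)
    (hwa : w ≠ a) (hnaw : ¬ G.Adj a w) (hncw : ¬ G.Adj c w) :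
    QuasiOf G a w s(a, c) := by
  have hcr : Crossing G A B s(a, c) :=
    ⟨by rwa [SimpleGraph.mem_edgeSet], ⟨a, by simp, ha⟩, ⟨c, by simp, hc⟩⟩
  obtain ⟨x₁, x₂, hm, hq⟩ := hsurj _ hcr
  obtain ⟨p, q, he, hpq, hmem, hdom⟩ := id hq
  have hwc : w ≠ c := by rintro rfl; exact (Set.disjoint_left.mp hdisj hw) hc
  -- the missing edge cannot be s(c, w):
  have hkill : ∀ z : V, s(x₁, x₂) = s(z, w) → z ∈ B → False := by
    intro z hx hzB
    rcases Sym2.eq_iff.mp hx with ⟨h1, h2⟩ | ⟨h1, h2⟩ <;>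
      rcases hm.2.2 with ⟨hA1, hA2⟩ | ⟨hB1, hB2⟩
    · exact Set.disjoint_left.mp hdisj (show z ∈ A by rw [← h1]; exact hA1) hzB
    · exact Set.disjoint_left.mp hdisj hw (show w ∈ B by rw [← h2]; exact hB2)
    · exact Set.disjoint_left.mp hdisj (show z ∈ A by rw [← h2]; exact hA2) hzB
    · exact Set.disjoint_left.mp hdisj hw (show w ∈ B by rw [← h1]; exact hB1)
  -- from domination of w, the missing edge must be s(a, w):
  have hgoal : s(x₁, x₂) = s(a, w) := by
    have hd := hdom w
    rcases Sym2.eq_iff.mp he with ⟨h1, h2⟩ | ⟨h1, h2⟩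
    · -- p = a, q = c
      subst h1; subst h2
      rcases hd with h | h | h | h
      · exact absurd h hwa
      · exact absurd h hwc
      · rcases h with h' | h'
        · exact absurd h' hnaw
        · have hx : s(a, w) = s(x₁, x₂) := by simpa using h'.1
          exact hx.symm
      · rcases h with h' | h'
        · exact absurd h' hncw
        · have hx : s(c, w) = s(x₁, x₂) := by simpa using h'.1
          exact absurd hc fun hcB => hkill c hx.symm hcB
    · -- p = c, q = a
      subst h1; subst h2
      rcases hd with h | h | h | h
      · exact absurd h hwc
      · exact absurd h hwa
      · rcases h with h' | h'
        · exact absurd h' hncw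
        · have hx : s(c, w) = s(x₁, x₂) := by simpa using h'.1
          exact absurd hc fun hcB => hkill c hx.symm hcB
      · rcases h with h' | h'
        · exact absurd h' hnaw
        · have hx : s(a, w) = s(x₁, x₂) := by simpa using h'.1
          exact hx.symm
  exact quasiOf_congr hgoal hq

lemma auxcard {V : Type*} [Fintype V] [DecidableEq V] {G : SimpleGraph V} {A B : Set V}
    (hdisj : Disjoint A B)
    (hgt : gammaT G = 3)
    (hsurj : ∀ e : Sym2 V, Crossing G A B e →
      ∃ u v : V, MissingWithin G A B u v ∧ QuasiOf G u v e)
    {u v y : V} (hu : u ∈ A) (hv : v ∈ A) (huv : u ≠ v) (hnadj : ¬ G.Adj u v)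
    (hy : y ∈ B) (hadj : G.Adj u y)
    (hdom : ∀ w : V, w = u ∨ w = y ∨
      (G ⊔ SimpleGraph.fromEdgeSet {s(u, v)}).Adj u w ∨
      (G ⊔ SimpleGraph.fromEdgeSet {s(u, v)}).Adj y w)
    (huniq : ∀ e' : Sym2 V, Crossing G A B e' → QuasiOf G u v e' → e' = s(u, y)) :
    {b | b ∈ B ∧ G.Adj u b}.ncard = {b | b ∈ B ∧ G.Adj v b}.ncard + 1 := by
  have hyA : y ∉ A := fun h => Set.disjoint_left.mp hdisj h hy
  have huy : u ≠ y := fun h => hyA (h ▸ hu)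
  have hvy : v ≠ y := fun h => hyA (h ▸ hv)
  -- Step 1: v is not adjacent to y (else {u, y} would be a 2-total-dominating set)
  have hnvy : ¬ G.Adj v y := by
    intro hvyadj
    have hTDS : ∀ w : V, ∃ x ∈ ({u, y} : Finset V), G.Adj w x := by
      intro w
      rcases hdom w with h | h | h | h
      · exact ⟨y, by simp, h ▸ hadj⟩
      · exact ⟨u, by simp, h ▸ hadj.symm⟩
      · rcases h with h' | h'
        · exact ⟨u, by simp, h'.symm⟩
        · have : s(u, w) = s(u, v) := by simpa using h'.1
          rcases Sym2.eq_iff.mp this with ⟨-, rfl⟩ | ⟨h1, -⟩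
          · exact ⟨y, by simp, hvyadj⟩
          · exact absurd h1 huv
      · rcases h with h' | h'
        · exact ⟨y, by simp, h'.symm⟩
        · have : s(y, w) = s(u, v) := by simpa using h'.1
          rcases Sym2.eq_iff.mp this with ⟨h1, -⟩ | ⟨h1, -⟩
          · exact absurd h1.symm huy
          · exact absurd h1.symm hvy
    have h2 : (2 : ℕ∞) ∈ {n : ℕ∞ | ∃ S : Finset V, (S.card : ℕ∞) = n ∧
        ∀ v : V, ∃ u ∈ S, G.Adj v u} :=
      ⟨{u, y}, by rw [Finset.card_pair huy]; norm_num, hTDS⟩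
    have hle : gammaT G ≤ 2 := sInf_le h2
    rw [hgt] at hle
    norm_num at hle
  -- Step 2: N_B(v) ⊆ N_B(u)
  have hsub1 : {b | b ∈ B ∧ G.Adj v b} ⊆ {b | b ∈ B ∧ G.Adj u b} := by
    rintro b ⟨hbB, hvb⟩
    refine ⟨hbB, ?_⟩
    by_contra hub
    have hqf : QuasiOf G v u s(v, b) :=
      force hdisj hsurj hv hbB hvb hu huv (fun h => hnadj h.symm)
        (fun h => hub h.symm)
    have hq' : QuasiOf G u v s(v, b) := quasiOf_congr Sym2.eq_swap hqf
    have hcr : Crossing G A B s(v, b) :=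
      ⟨by rwa [SimpleGraph.mem_edgeSet], ⟨v, by simp, hv⟩, ⟨b, by simp, hbB⟩⟩
    have := huniq _ hcr hq'
    rcases Sym2.eq_iff.mp this with ⟨h1, -⟩ | ⟨h1, -⟩
    · exact huv h1.symm
    · exact hvy h1
  -- Step 3: N_B(u) ⊆ N_B(v) ∪ {y}
  have hsub2 : {b | b ∈ B ∧ G.Adj u b} ⊆ insert y {b | b ∈ B ∧ G.Adj v b} := by
    rintro b ⟨hbB, hub⟩
    by_cases hby : b = y
    · exact Set.mem_insert_iff.mpr (Or.inl hby)
    refine Set.mem_insert_iff.mpr (Or.inr ⟨hbB, ?_⟩)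
    by_contra hvb
    have hqf : QuasiOf G u v s(u, b) :=
      force hdisj hsurj hu hbB hub hv huv.symm hnadj (fun h => hvb h.symm)
    have hcr : Crossing G A B s(u, b) :=
      ⟨by rwa [SimpleGraph.mem_edgeSet], ⟨u, by simp, hu⟩, ⟨b, by simp, hbB⟩⟩
    have := huniq _ hcr hqf
    rcases Sym2.eq_iff.mp this with ⟨-, h2⟩ | ⟨h1, -⟩
    · exact hby h2
    · exact huy h1
  have hynot : y ∉ {b | b ∈ B ∧ G.Adj v b} := fun h => hnvy h.2
  have heq : {b | b ∈ B ∧ G.Adj u b} = insert y {b | b ∈ B ∧ G.Adj v b} :=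
    Set.Subset.antisymm hsub2 (Set.insert_subset ⟨hy, hadj⟩ hsub1)
  rw [heq, Set.ncard_insert_of_notMem hynot (Set.toFinite _)]

lemma keylemma {V : Type*} [Fintype V] [DecidableEq V] {G : SimpleGraph V} {A B : Set V}
    (hdisj : Disjoint A B)
    (hgt : gammaT G = 3)
    (hquasi : ∀ u v : V, MissingWithin G A B u v →
      ∃! e : Sym2 V, Crossing G A B e ∧ QuasiOf G u v e)
    (hsurj : ∀ e : Sym2 V, Crossing G A B e →
      ∃ u v : V, MissingWithin G A B u v ∧ QuasiOf G u v e)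
    {u v : V} (hu : u ∈ A) (hv : v ∈ A) (hne : u ≠ v) (hnadj : ¬ G.Adj u v) :
    {b | b ∈ B ∧ G.Adj u b}.ncard = {b | b ∈ B ∧ G.Adj v b}.ncard + 1 ∨
    {b | b ∈ B ∧ G.Adj v b}.ncard = {b | b ∈ B ∧ G.Adj u b}.ncard + 1 := by
  obtain ⟨e, ⟨hcr, hq⟩, huniq⟩ := hquasi u v ⟨hne, hnadj, Or.inl ⟨hu, hv⟩⟩
  obtain ⟨p, q, he, hpq, hmem, hdom⟩ := hq
  obtain ⟨-, -, yb, hybmem, hybB⟩ := hcr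
  rw [he] at hybmem
  rcases Sym2.mem_iff.mp hybmem with rfl | rfl
  · -- the B-endpoint of e is p, hence q ∈ {u, v}
    rcases hmem with h | h | h | h
    · exact absurd hu fun hh => Set.disjoint_left.mp hdisj hh (h ▸ hybB)
    · exact absurd hv fun hh => Set.disjoint_left.mp hdisj hh (h ▸ hybB)
    · -- q = u, quasi-edge is s(u, p)
      left
      refine auxcard hdisj hgt hsurj hu hv hne hnadj hybB (h ▸ hpq).symm
        (fun w => by have hdw := hdom w; rw [h] at hdw; tauto) ?_
      intro e' hc hq'
      rw [huniq e' ⟨hc, hq'⟩, he, h]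
      exact Sym2.eq_swap
    · -- q = v, quasi-edge is s(v, p): roles of u, v swap
      right
      refine auxcard hdisj hgt hsurj hv hu hne.symm (fun hh => hnadj hh.symm)
        hybB (h ▸ hpq).symm
        (fun w => by
          rw [show s(v, u) = s(u, v) from Sym2.eq_swap]
          have hdw := hdom w; rw [h] at hdw; tauto) ?_
      intro e' hc hq'
      rw [huniq e' ⟨hc, quasiOf_congr Sym2.eq_swap hq'⟩, he, h]
      exact Sym2.eq_swap
  · -- the B-endpoint of e is q, hence p ∈ {u, v}
    rcases hmem with h | h | h | h
    · -- p = u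
      left
      refine auxcard hdisj hgt hsurj hu hv hne hnadj hybB (h ▸ hpq)
        (fun w => by have hdw := hdom w; rw [h] at hdw; tauto) ?_
      intro e' hc hq'
      rw [huniq e' ⟨hc, hq'⟩, he, h]
    · -- p = v
      right
      refine auxcard hdisj hgt hsurj hv hu hne.symm (fun hh => hnadj hh.symm)
        hybB (h ▸ hpq)
        (fun w => by
          rw [show s(v, u) = s(u, v) from Sym2.eq_swap]
          have hdw := hdom w; rw [h] at hdw; tauto) ?_
      intro e' hc hq'
      rw [huniq e' ⟨hc, quasiOf_congr Sym2.eq_swap hq'⟩, he, h]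
    · exact absurd hu fun hh => Set.disjoint_left.mp hdisj hh (h ▸ hybB)
    · exact absurd hv fun hh => Set.disjoint_left.mp hdisj hh (h ▸ hybB)


/-- If a 3-γₜ-edge-critical graph G on n vertices has at least
⌊n²/4⌋ missing edges and a vertex partition (A, B) in which every missing
edge within a part has a unique crossing quasi-edge and every crossing edge
is a quasi-edge of such a missing edge, then the missing edges within A form
a bipartite graph on A. -/
theorem stmt15 {V : Type*} [Fintype V] [DecidableEq V] (G : SimpleGraph V)
    (hcrit : Critical3 G)
    (hedges : Fintype.card V ^ 2 / 4 ≤ Gᶜ.edgeSet.ncard)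
    (A B : Set V) (hdisj : Disjoint A B) (hcover : A ∪ B = Set.univ)
    (hquasi : ∀ u v : V, MissingWithin G A B u v →
      ∃! e : Sym2 V, Crossing G A B e ∧ QuasiOf G u v e)
    (hsurj : ∀ e : Sym2 V, Crossing G A B e →
      ∃ u v : V, MissingWithin G A B u v ∧ QuasiOf G u v e) :
    ∃ X Y : Set V, X ∪ Y = A ∧ Disjoint X Y ∧
      ∀ u v : V, u ∈ A → v ∈ A → u ≠ v → ¬ G.Adj u v →
        ((u ∈ X ∧ v ∈ Y) ∨ (u ∈ Y ∧ v ∈ X)) := by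

  refine ⟨{a | a ∈ A ∧ Even ({b | b ∈ B ∧ G.Adj a b}.ncard)},
    {a | a ∈ A ∧ ¬ Even ({b | b ∈ B ∧ G.Adj a b}.ncard)}, ?_, ?_, ?_⟩
  · ext x
    simp only [Set.mem_union, Set.mem_setOf_eq]
    tauto
  · rw [Set.disjoint_left]
    rintro x ⟨-, h1⟩ ⟨-, h2⟩
    exact h2 h1
  · intro u v hu hv hne hnadj
    have hiff : Even ({b | b ∈ B ∧ G.Adj u b}.ncard) ↔
        ¬ Even ({b | b ∈ B ∧ G.Adj v b}.ncard) := by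
      rcases keylemma hdisj hcrit.1 hquasi hsurj hu hv hne hnadj with h | h
      · rw [h, Nat.even_add_one]
      · have h2 : Even ({b | b ∈ B ∧ G.Adj v b}.ncard) ↔
            ¬ Even ({b | b ∈ B ∧ G.Adj u b}.ncard) := by
          rw [h, Nat.even_add_one]
        tauto
    simp only [Set.mem_setOf_eq]
    tauto
end

section
/- Let G be a 3-γₜ-edge-critical graph of diameter two with a two-vertex cut {x,y}, let the weak vertices be those vertices of G − {x,y} adjacent to exactly one of x, y. Then the set of weak vertices is a clique and all weak vertices lie in a single component of G − {x,y}. -/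
private lemma gammaT_le_two {V : Type*} [DecidableEq V] (G : SimpleGraph V) {a b : V}
    (hab : a ≠ b) (hdom : ∀ v : V, G.Adj v a ∨ G.Adj v b) : gammaT G ≤ 2 := by
  have hmem : (2:ℕ∞) ∈ {n : ℕ∞ | ∃ S : Finset V, (S.card : ℕ∞) = n ∧ ∀ v : V, ∃ u ∈ S, G.Adj v u} := by
    refine ⟨{a,b}, by simp [Finset.card_pair hab], fun v => ?_⟩
    rcases hdom v with h | h
    · exact ⟨a, by simp, h⟩
    · exact ⟨b, by simp, h⟩
  exact sInf_le hmem

private lemma exists_pair_of_gammaT_eq_two {V : Type*} [DecidableEq V] (G : SimpleGraph V)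
    (h : gammaT G = 2) : ∃ a b : V, a ≠ b ∧ ∀ v : V, G.Adj v a ∨ G.Adj v b := by
  have h' : sInf {n : ℕ∞ | ∃ S : Finset V, (S.card : ℕ∞) = n ∧ ∀ v : V, ∃ u ∈ S, G.Adj v u} = 2 := h
  have hlt : sInf {n : ℕ∞ | ∃ S : Finset V, (S.card : ℕ∞) = n ∧ ∀ v : V, ∃ u ∈ S, G.Adj v u} < 3 := by
    rw [h']; norm_num
  obtain ⟨n, hn, hn3⟩ := sInf_lt_iff.mp hlt
  have h2 : (2:ℕ∞) ≤ n := h' ▸ sInf_le hn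
  obtain ⟨S, hS, hdom⟩ := hn
  subst hS
  have l1 : S.card < 3 := by exact_mod_cast hn3
  have l2 : 2 ≤ S.card := by exact_mod_cast h2
  have hc : S.card = 2 := by omega
  obtain ⟨a, b, hab, hS2⟩ := Finset.card_eq_two.mp hc
  subst hS2
  refine ⟨a, b, hab, fun v => ?_⟩
  obtain ⟨u, hu, hadj⟩ := hdom v
  simp only [Finset.mem_insert, Finset.mem_singleton] at hu
  rcases hu with rfl | rfl
  · exact Or.inl hadj
  · exact Or.inr hadj

private lemma mem_compl_pair {V : Type*} {x y u : V} (hx : u ≠ x) (hy : u ≠ y) :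
    u ∈ (({x, y} : Set V)ᶜ) := by simp [hx, hy]

private lemma ne_of_mem_compl_pair {V : Type*} {x y u : V}
    (h : u ∈ (({x, y} : Set V)ᶜ)) : u ≠ x ∧ u ≠ y := by
  simpa [not_or] using h

private lemma reach_of_adj {V : Type*} (G : SimpleGraph V) (x y : V) {u w : V}
    (hu : u ∈ (({x, y} : Set V)ᶜ)) (hw : w ∈ (({x, y} : Set V)ᶜ))
    (h : G.Adj u w) :
    (G.induce (({x, y} : Set V)ᶜ)).Reachable ⟨u, hu⟩ ⟨w, hw⟩ :=
  SimpleGraph.Adj.reachable (by simpa using h)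

/-- Middle vertex avoiding x and y for nonadjacent "mixed type" weak vertices. -/
private lemma common_mid {V : Type*} (G : SimpleGraph V)
    (hdiam : ∀ u v : V, u ≠ v → G.Adj u v ∨ ∃ w : V, G.Adj u w ∧ G.Adj w v)
    (x y v v' : V) (hne : v ≠ v') (hnadj : ¬ G.Adj v v')
    (h1 : ¬ G.Adj y v) (h2 : ¬ G.Adj x v') :
    ∃ m : V, m ≠ x ∧ m ≠ y ∧ G.Adj v m ∧ G.Adj m v' := by
  rcases hdiam v v' hne with h | ⟨m, hm1, hm2⟩
  · exact absurd h hnadj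
  · refine ⟨m, ?_, ?_, hm1, hm2⟩
    · rintro rfl; exact h2 hm2
    · rintro rfl; exact h1 hm1.symm

/-- If v and v' are joined through a middle vertex avoiding {x,y}, and the pair
{v,v'} dominates everything else, we contradict the cut. -/
private lemma reach_contra {V : Type*} (G : SimpleGraph V) (x y : V)
    (hcut : RemovalDisconnects G {x, y}) {v v' : V}
    (hvx : v ≠ x) (hvy : v ≠ y) (hv'x : v' ≠ x) (hv'y : v' ≠ y)
    (hm : ∃ m : V, m ≠ x ∧ m ≠ y ∧ G.Adj v m ∧ G.Adj m v')
    (hdomp : ∀ u : V, u ≠ x → u ≠ y → u ≠ v → u ≠ v' → (G.Adj u v ∨ G.Adj u v')) :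
    False := by
  obtain ⟨m, hmx, hmy, hvm, hmv'⟩ := hm
  set K : Set V := ({x, y} : Set V)ᶜ with hK
  have hv : v ∈ K := mem_compl_pair hvx hvy
  have hv' : v' ∈ K := mem_compl_pair hv'x hv'y
  have hmK : m ∈ K := mem_compl_pair hmx hmy
  have hreach : (G.induce K).Reachable ⟨v, hv⟩ ⟨v', hv'⟩ :=
    (reach_of_adj G x y hv hmK hvm).trans (reach_of_adj G x y hmK hv' hmv')
  obtain ⟨a, b, hnr⟩ := hcut
  have hone : ¬ (G.induce K).Reachable ⟨v, hv⟩ a ∨ ¬ (G.induce K).Reachable ⟨v, hv⟩ b := by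
    by_contra hcon
    push_neg at hcon
    exact hnr (hcon.1.symm.trans hcon.2)
  have key : ∀ c : (K : Set V), ¬ (G.induce K).Reachable ⟨v, hv⟩ c → False := by
    intro c hc
    obtain ⟨hcx, hcy⟩ := ne_of_mem_compl_pair c.2
    have hcv : (c : V) ≠ v := by
      rintro hh
      exact hc (by rw [show c = (⟨v, hv⟩ : K) from Subtype.ext hh])
    have hcv' : (c : V) ≠ v' := by
      rintro hh
      exact hc (by rw [show c = (⟨v', hv'⟩ : K) from Subtype.ext hh]; exact hreach)
    rcases hdomp c hcx hcy hcv hcv' with h | h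
    · exact hc (reach_of_adj G x y hv c.2 h.symm)
    · exact hc (hreach.trans (reach_of_adj G x y hv' c.2 h.symm))
  rcases hone with hc | hc
  · exact key a hc
  · exact key b hc

private lemma adj_sup_decomp {V : Type*} [DecidableEq V] (G : SimpleGraph V)
    {v v' a b : V}
    (h : (G ⊔ SimpleGraph.fromEdgeSet {s(v, v')}).Adj a b) :
    G.Adj a b ∨ (a = v ∧ b = v') ∨ (a = v' ∧ b = v) := by
  simp only [SimpleGraph.sup_adj, SimpleGraph.fromEdgeSet_adj, Set.mem_singleton_iff,
    Sym2.eq, Sym2.rel_iff', Prod.mk.injEq, Prod.swap_prod_mk] at h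
  tauto

/-- Core contradiction: v, v' weak nonadjacent, and {v, w} totally dominates G + vv'. -/
private lemma core {V : Type*} [DecidableEq V] (G : SimpleGraph V) (x y : V)
    (hg3 : gammaT G = 3)
    (hdiam : ∀ u v : V, u ≠ v → G.Adj u v ∨ ∃ w : V, G.Adj u w ∧ G.Adj w v)
    (hcut : RemovalDisconnects G {x, y})
    (hnxy : ¬ G.Adj x y)
    (v v' w : V)
    (hvx : v ≠ x) (hvy : v ≠ y) (hv'x : v' ≠ x) (hv'y : v' ≠ y)
    (hwv : (G.Adj x v ∧ ¬ G.Adj y v) ∨ (G.Adj y v ∧ ¬ G.Adj x v))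
    (hwv' : (G.Adj x v' ∧ ¬ G.Adj y v') ∨ (G.Adj y v' ∧ ¬ G.Adj x v'))
    (hne : v ≠ v') (hnadj : ¬ G.Adj v v')
    (hdom : ∀ u : V, (G ⊔ SimpleGraph.fromEdgeSet {s(v, v')}).Adj u v ∨
      (G ⊔ SimpleGraph.fromEdgeSet {s(v, v')}).Adj u w) : False := by
  have hg32 : ¬ (gammaT G ≤ 2) := by rw [hg3]; norm_num
  -- v needs a neighbour in {v, w}
  have hvw : w = v' ∨ G.Adj v w := by
    rcases hdom v with h | h
    · exact absurd h (SimpleGraph.irrefl _)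
    · rcases adj_sup_decomp G h with h | ⟨_, rfl⟩ | ⟨h1, _⟩
      · exact Or.inr h
      · exact Or.inl rfl
      · exact absurd h1 hne
  rcases hvw with hwv'eq | hGvw
  · have hwv'eq' := hwv'eq.symm
    subst hwv'eq'
    -- Case S = {v, v'}
    have hvv' : ∀ u : V, u ≠ v → u ≠ v' → (G.Adj u v ∨ G.Adj u v') := by
      intro u h1 h2
      rcases hdom u with h | h
      · rcases adj_sup_decomp G h with h' | ⟨h1', h2'⟩ | ⟨h1', h2'⟩
        · exact Or.inl h'
        · exact absurd h1' h1
        · exact absurd h1' h2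
      · rcases adj_sup_decomp G h with h' | ⟨h1', h2'⟩ | ⟨h1', h2'⟩
        · exact Or.inr h'
        · exact absurd h1' h1
        · exact absurd h1' h2
    rcases hwv with ⟨hx1, hy1⟩ | ⟨hy1, hx1⟩ <;> rcases hwv' with ⟨hx2, hy2⟩ | ⟨hy2, hx2⟩
    · -- both weak-x : y is undominated
      rcases hvv' y (Ne.symm hvy) (Ne.symm hv'y) with h | h
      · exact hy1 h
      · exact hy2 h
    · -- mixed
      have hm := common_mid G hdiam x y v v' hne hnadj hy1 hx2
      exact reach_contra G x y hcut hvx hvy hv'x hv'y hm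
        (fun u h1 h2 h3 h4 => hvv' u h3 h4)
    · -- mixed (other orientation)
      obtain ⟨m, hmy, hmx, hm1, hm2⟩ := common_mid G hdiam y x v v' hne hnadj hx1 hy2
      exact reach_contra G x y hcut hvx hvy hv'x hv'y ⟨m, hmx, hmy, hm1, hm2⟩
        (fun u h1 h2 h3 h4 => hvv' u h3 h4)
    · -- both weak-y : x is undominated
      rcases hvv' x (Ne.symm hvx) (Ne.symm hv'x) with h | h
      · exact hx1 h
      · exact hx2 h
  · -- Case G.Adj v w
    have hwne : w ≠ v' := fun hh => hnadj (hh ▸ hGvw)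
    have hwnv : v ≠ w := G.ne_of_adj hGvw
    have hGdom : ∀ u : V, u ≠ v' → (G.Adj u v ∨ G.Adj u w) := by
      intro u hu
      rcases hdom u with h | h
      · rcases adj_sup_decomp G h with h' | ⟨h1', h2'⟩ | ⟨h1', h2'⟩
        · exact Or.inl h'
        · exact absurd h2' hne
        · exact absurd h1' hu
      · rcases adj_sup_decomp G h with h' | ⟨h1', h2'⟩ | ⟨h1', h2'⟩
        · exact Or.inr h'
        · exact absurd h2' hwne
        · exact absurd h1' hu
    have hnv'w : ¬ G.Adj v' w := by
      intro h
      refine hg32 (gammaT_le_two G hwnv ?_)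
      intro u
      by_cases hu : u = v'
      · exact Or.inr (hu ▸ h)
      · exact hGdom u hu
    by_cases hwx : w = x
    · subst hwx
      rcases hwv with ⟨hx1, hy1⟩ | ⟨hy1, hx1⟩
      · rcases hGdom y (Ne.symm hv'y) with h | h
        · exact hy1 h
        · exact hnxy h.symm
      · exact hx1 hGvw.symm
    by_cases hwy : w = y
    · subst hwy
      rcases hwv with ⟨hx1, hy1⟩ | ⟨hy1, hx1⟩
      · exact hy1 hGvw.symm
      · rcases hGdom x (Ne.symm hv'x) with h | h
        · exact hx1 h
        · exact hnxy h
    -- now w ∉ {x,y} : v' is isolated in G - {x,y}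
    set K : Set V := ({x, y} : Set V)ᶜ with hK
    have hvK : v ∈ K := mem_compl_pair hvx hvy
    have hv'K : v' ∈ K := mem_compl_pair hv'x hv'y
    have hwK : w ∈ K := mem_compl_pair hwx hwy
    have hreach_v : ∀ (u : V) (hu : u ∈ K), u ≠ v' →
        (G.induce K).Reachable ⟨u, hu⟩ ⟨v, hvK⟩ := by
      intro u hu huv'
      rcases hGdom u huv' with h | h
      · exact reach_of_adj G x y hu hvK h
      · exact (reach_of_adj G x y hu hwK h).trans (reach_of_adj G x y hwK hvK hGvw.symm)
    obtain ⟨a, b, hnr⟩ := hcut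
    have hnrv' : ¬ (G.induce K).Reachable ⟨v', hv'K⟩ ⟨v, hvK⟩ := by
      intro hr
      by_cases ha : (a : V) = v'
      · by_cases hb : (b : V) = v'
        · exact hnr (by rw [show a = b from Subtype.ext (ha.trans hb.symm)])
        · have h1 : a = (⟨v', hv'K⟩ : K) := Subtype.ext ha
          exact hnr ((h1 ▸ hr).trans (hreach_v b b.2 hb).symm)
      · by_cases hb : (b : V) = v'
        · have h1 : b = (⟨v', hv'K⟩ : K) := Subtype.ext hb
          exact hnr ((hreach_v a a.2 ha).trans (h1 ▸ hr).symm)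
        · exact hnr ((hreach_v a a.2 ha).trans (hreach_v b b.2 hb).symm)
    have hN : ∀ u : V, G.Adj v' u → u = x ∨ u = y := by
      intro u hadj
      by_contra hcon
      push_neg at hcon
      have huK : u ∈ K := mem_compl_pair hcon.1 hcon.2
      have huv' : u ≠ v' := fun hh => (SimpleGraph.irrefl G) (hh ▸ hadj)
      exact hnrv' ((reach_of_adj G x y hv'K huK hadj).trans (hreach_v u huK huv'))
    -- z : the unique neighbour of v' among {x, y}
    obtain ⟨z, hzadj, hNz⟩ : ∃ z : V, G.Adj z v' ∧ ∀ u : V, G.Adj v' u → u = z := by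
      rcases hwv' with ⟨h1, h2⟩ | ⟨h1, h2⟩
      · refine ⟨x, h1, fun u hadj => ?_⟩
        rcases hN u hadj with rfl | rfl
        · rfl
        · exact absurd hadj.symm h2
      · refine ⟨y, h1, fun u hadj => ?_⟩
        rcases hN u hadj with rfl | rfl
        · exact absurd hadj.symm h2
        · rfl
    have hzall : ∀ u : V, u ≠ z → G.Adj u z := by
      intro u huz
      by_cases huv' : u = v'
      · exact huv' ▸ hzadj.symm
      · rcases hdiam v' u (Ne.symm huv') with h | ⟨m, hm1, hm2⟩
        · exact absurd (hNz u h) huz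
        · have : m = z := hNz m hm1
          exact (this ▸ hm2).symm
    have hzv' : z ≠ v' := G.ne_of_adj hzadj
    refine hg32 (gammaT_le_two G hzv' (fun u => ?_))
    by_cases huz : u = z
    · exact Or.inr (huz ▸ hzadj)
    · exact Or.inl (hzall u huz)

/-- In a 3-γₜ-edge-critical diameter-two graph with a
two-vertex cut {x,y}, the weak vertices (adjacent to exactly one of x, y)
form a clique lying in a single component of G - {x,y}. -/
theorem stmt18 {V : Type*} [DecidableEq V] (G : SimpleGraph V)
    (hcrit : Critical3 G) (hconn : G.Connected) (hdiam : DiamTwo G)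
    (x y : V) (hxy : x ≠ y) (hcut : RemovalDisconnects G {x, y}) :
    (∀ v v' : V, v ∈ (({x, y} : Set V)ᶜ) → v' ∈ (({x, y} : Set V)ᶜ) →
      ((G.Adj x v ∧ ¬ G.Adj y v) ∨ (G.Adj y v ∧ ¬ G.Adj x v)) →
      ((G.Adj x v' ∧ ¬ G.Adj y v') ∨ (G.Adj y v' ∧ ¬ G.Adj x v')) →
      v ≠ v' → G.Adj v v') ∧
    (∀ (v v' : V) (hv : v ∈ (({x, y} : Set V)ᶜ)) (hv' : v' ∈ (({x, y} : Set V)ᶜ)),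
      ((G.Adj x v ∧ ¬ G.Adj y v) ∨ (G.Adj y v ∧ ¬ G.Adj x v)) →
      ((G.Adj x v' ∧ ¬ G.Adj y v') ∨ (G.Adj y v' ∧ ¬ G.Adj x v')) →
      (G.induce (({x, y} : Set V)ᶜ)).Reachable ⟨v, hv⟩ ⟨v', hv'⟩) := by
  have hdiam2 := hdiam.1
  have hg3 := hcrit.1
  have hg32 : ¬ (gammaT G ≤ 2) := by rw [hg3]; norm_num
  set K : Set V := ({x, y} : Set V)ᶜ with hK
  -- {x,y} dominates G - {x,y}
  have L1 : ∀ u : V, u ≠ x → u ≠ y → G.Adj x u ∨ G.Adj y u := by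
    intro u hux huy
    have huK : u ∈ K := mem_compl_pair hux huy
    obtain ⟨a, b, hnr⟩ := hcut
    have hone : ¬ (G.induce K).Reachable ⟨u, huK⟩ a ∨ ¬ (G.induce K).Reachable ⟨u, huK⟩ b := by
      by_contra hcon
      push_neg at hcon
      exact hnr (hcon.1.symm.trans hcon.2)
    have key : ∀ c : (K : Set V), ¬ (G.induce K).Reachable ⟨u, huK⟩ c →
        G.Adj x u ∨ G.Adj y u := by
      intro c hc
      have hcu : u ≠ (c : V) := by
        rintro hh
        exact hc (by rw [show (⟨u, huK⟩ : K) = c from Subtype.ext hh])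
      rcases hdiam2 u c hcu with h | ⟨m, hm1, hm2⟩
      · exact absurd (reach_of_adj G x y huK c.2 h) hc
      · by_cases hmx : m = x
        · exact Or.inl (hmx ▸ hm1).symm
        by_cases hmy : m = y
        · exact Or.inr (hmy ▸ hm1).symm
        have hmK : m ∈ K := mem_compl_pair hmx hmy
        exact absurd ((reach_of_adj G x y huK hmK hm1).trans
          (reach_of_adj G x y hmK c.2 hm2)) hc
    rcases hone with hc | hc
    · exact key a hc
    · exact key b hc
  -- x and y are not adjacent
  have hnxy : ¬ G.Adj x y := by
    intro h
    refine hg32 (gammaT_le_two G hxy (fun u => ?_))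
    by_cases hux : u = x
    · exact Or.inr (hux ▸ h)
    by_cases huy : u = y
    · exact Or.inl (huy ▸ h.symm)
    rcases L1 u hux huy with h' | h'
    · exact Or.inl h'.symm
    · exact Or.inr h'.symm
  have part1 : ∀ v v' : V, v ∈ K → v' ∈ K →
      ((G.Adj x v ∧ ¬ G.Adj y v) ∨ (G.Adj y v ∧ ¬ G.Adj x v)) →
      ((G.Adj x v' ∧ ¬ G.Adj y v') ∨ (G.Adj y v' ∧ ¬ G.Adj x v')) →
      v ≠ v' → G.Adj v v' := by
    intro v v' hv hv' hwv hwv' hne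
    by_contra hnadj
    obtain ⟨hvx, hvy⟩ := ne_of_mem_compl_pair hv
    obtain ⟨hv'x, hv'y⟩ := ne_of_mem_compl_pair hv'
    obtain ⟨a, b, hab, hdompair⟩ :=
      exists_pair_of_gammaT_eq_two _ (hcrit.2 v v' hne hnadj)
    have hnadj' : ¬ G.Adj v' v := fun h => hnadj h.symm
    have hswap : s(v', v) = s(v, v') := Sym2.eq_swap
    by_cases hav : a = v
    · subst hav
      exact core G x y hg3 hdiam2 hcut hnxy a v' b hvx hvy hv'x hv'y hwv hwv' hne hnadj
        (fun u => hdompair u)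
    by_cases hbv : b = v
    · subst hbv
      exact core G x y hg3 hdiam2 hcut hnxy b v' a hvx hvy hv'x hv'y hwv hwv' hne hnadj
        (fun u => (hdompair u).symm)
    by_cases hav' : a = v'
    · subst hav'
      refine core G x y hg3 hdiam2 hcut hnxy a v b hv'x hv'y hvx hvy hwv' hwv
        (Ne.symm hne) hnadj' (fun u => ?_)
      rw [hswap]
      exact hdompair u
    by_cases hbv' : b = v'
    · subst hbv'
      refine core G x y hg3 hdiam2 hcut hnxy b v a hv'x hv'y hvx hvy hwv' hwv
        (Ne.symm hne) hnadj' (fun u => ?_)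
      rw [hswap]
      exact (hdompair u).symm
    -- none of a, b in {v, v'} : {a,b} dominates G, contradiction
    refine hg32 (gammaT_le_two G hab (fun u => ?_))
    rcases hdompair u with h | h
    · rcases adj_sup_decomp G h with h' | ⟨h1', h2'⟩ | ⟨h1', h2'⟩
      · exact Or.inl h'
      · exact absurd h2' hav'
      · exact absurd h2' hav
    · rcases adj_sup_decomp G h with h' | ⟨h1', h2'⟩ | ⟨h1', h2'⟩
      · exact Or.inr h'
      · exact absurd h2' hbv'
      · exact absurd h2' hbv
  refine ⟨part1, ?_⟩
  intro v v' hv hv' hwv hwv'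
  by_cases h : v = v'
  · subst h
    exact SimpleGraph.Reachable.refl _
  · exact reach_of_adj G x y hv hv' (part1 v v' hv hv' hwv hwv' h)
end

section
/- If G is a 3-γₜ-edge-critical graph on n vertices whose vertex connectivity equals two, and G has diameter two, then |E(Gᶜ)| < ⌊n²/4⌋. -/
set_option linter.unusedSectionVars false
set_option maxHeartbeats 1000000

namespace Stmt19Aux
open SimpleGraph Finset

variable {V : Type*} [Fintype V] [DecidableEq V] {G : SimpleGraph V}

lemma gammaT_le_two {p q : V} (hpq : G.Adj p q)
    (hdom : ∀ z, G.Adj z p ∨ G.Adj z q) : gammaT G ≤ 2 := by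
  have hcard : ((({p, q} : Finset V).card : ℕ∞)) = 2 := by
    rw [Finset.card_insert_of_notMem (by simp [hpq.ne]), Finset.card_singleton]
    rfl
  refine sInf_le ⟨{p, q}, hcard, ?_⟩
  intro v
  rcases hdom v with h | h
  · exact ⟨p, by simp, h⟩
  · exact ⟨q, by simp, h⟩

lemma no2TDS (h3 : gammaT G = 3) {p q : V} (hpq : G.Adj p q) :
    ∃ z, ¬G.Adj z p ∧ ¬G.Adj z q := by
  by_contra h
  push_neg at h
  have h2 := gammaT_le_two hpq (fun z => or_iff_not_imp_left.mpr (h z))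
  rw [h3] at h2
  exact absurd h2 (by norm_num)

lemma exists_pair {G' : SimpleGraph V} (v0 : V) (h2 : gammaT G' = 2) :
    ∃ p q, p ≠ q ∧ G'.Adj p q ∧ ∀ z, G'.Adj z p ∨ G'.Adj z q := by
  have hlt : sInf {n : ℕ∞ | ∃ S : Finset V, (S.card : ℕ∞) = n ∧ ∀ v : V, ∃ u ∈ S, G'.Adj v u} < 3 := by
    rw [show sInf _ = (2 : ℕ∞) from h2]; norm_num
  obtain ⟨m, ⟨S, hScard, hSdom⟩, hm3⟩ := sInf_lt_iff.mp hlt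
  rw [← hScard] at hm3
  have hcard : S.card < 3 := by exact_mod_cast hm3
  interval_cases h : S.card
  · obtain ⟨u, hu, _⟩ := hSdom v0
    rw [Finset.card_eq_zero.mp h] at hu
    exact absurd hu (Finset.notMem_empty u)
  · obtain ⟨p, hp⟩ := Finset.card_eq_one.mp h
    obtain ⟨u, hu, hadj⟩ := hSdom p
    rw [hp, Finset.mem_singleton] at hu
    exact absurd (hu ▸ hadj) (G'.irrefl)
  · obtain ⟨p, q, hne, hpq⟩ := Finset.card_eq_two.mp h
    refine ⟨p, q, hne, ?_, ?_⟩
    · obtain ⟨u, hu, hadj⟩ := hSdom p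
      rw [hpq] at hu
      rcases Finset.mem_insert.mp hu with rfl | hu
      · exact absurd hadj (G'.irrefl)
      · exact (Finset.mem_singleton.mp hu) ▸ hadj
    · intro z
      obtain ⟨u, hu, hadj⟩ := hSdom z
      rw [hpq] at hu
      rcases Finset.mem_insert.mp hu with rfl | hu
      · exact Or.inl hadj
      · exact Or.inr ((Finset.mem_singleton.mp hu) ▸ hadj)

lemma adj_sup_iff {u v a b : V} (hne : u ≠ v) :
    (G ⊔ SimpleGraph.fromEdgeSet {s(u, v)}).Adj a b ↔
      G.Adj a b ∨ (a = u ∧ b = v) ∨ (a = v ∧ b = u) := by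
  rw [sup_adj, fromEdgeSet_adj]
  constructor
  · rintro (h | ⟨h, _⟩)
    · exact Or.inl h
    · rw [Set.mem_singleton_iff, Sym2.eq_iff] at h
      exact Or.inr h
  · rintro (h | ⟨rfl, rfl⟩ | ⟨rfl, rfl⟩)
    · exact Or.inl h
    · exact Or.inr ⟨by rw [Set.mem_singleton_iff], hne⟩
    · exact Or.inr ⟨by rw [Set.mem_singleton_iff, Sym2.eq_iff]; tauto, hne.symm⟩

lemma trichotomy (h3 : gammaT G = 3)
    (hcrit2 : ∀ u v : V, u ≠ v → ¬ G.Adj u v →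
      gammaT (G ⊔ SimpleGraph.fromEdgeSet {s(u, v)}) = 2)
    {u v : V} (hne : u ≠ v) (hnadj : ¬G.Adj u v) :
    (∀ z, z ≠ u → z ≠ v → G.Adj z u ∨ G.Adj z v) ∨
    (∃ q, G.Adj u q ∧ ∀ z, z ≠ v → G.Adj z u ∨ G.Adj z q) ∨
    (∃ q, G.Adj v q ∧ ∀ z, z ≠ u → G.Adj z v ∨ G.Adj z q) := by
  obtain ⟨p, q, hpq, hadj, hdom⟩ := exists_pair u (hcrit2 u v hne hnadj)
  -- helper to decode adjacency
  have dec : ∀ a b : V, (G ⊔ SimpleGraph.fromEdgeSet {s(u, v)}).Adj a b →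
      G.Adj a b ∨ (a = u ∧ b = v) ∨ (a = v ∧ b = u) := fun a b h => (adj_sup_iff hne).mp h
  by_cases hpuv : p ≠ u ∧ p ≠ v ∧ q ≠ u ∧ q ≠ v
  · -- {p,q} is a TDS of G : contradiction
    obtain ⟨h1, h2, h3', h4⟩ := hpuv
    exfalso
    have hGpq : G.Adj p q := by
      rcases dec p q hadj with h | ⟨rfl, rfl⟩ | ⟨rfl, rfl⟩
      · exact h
      · exact absurd rfl h1
      · exact absurd rfl h2
    have hGdom : ∀ z, G.Adj z p ∨ G.Adj z q := by
      intro z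
      rcases hdom z with h | h
      · rcases dec z p h with h' | ⟨rfl, h'⟩ | ⟨rfl, h'⟩
        · exact Or.inl h'
        · exact absurd h' h2
        · exact absurd h' h1
      · rcases dec z q h with h' | ⟨rfl, h'⟩ | ⟨rfl, h'⟩
        · exact Or.inr h'
        · exact absurd h' h4
        · exact absurd h' h3'
    have := gammaT_le_two hGpq hGdom
    rw [h3] at this
    exact absurd this (by norm_num)
  · -- some endpoint is u or v
    push_neg at hpuv
    -- symmetric handler
    have main : ∀ p' q' : V, p' ≠ q' →
        (G ⊔ SimpleGraph.fromEdgeSet {s(u, v)}).Adj p' q' →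
        (∀ z, (G ⊔ SimpleGraph.fromEdgeSet {s(u, v)}).Adj z p' ∨
              (G ⊔ SimpleGraph.fromEdgeSet {s(u, v)}).Adj z q') →
        (p' = u ∨ p' = v) →
        (∀ z, z ≠ u → z ≠ v → G.Adj z u ∨ G.Adj z v) ∨
        (∃ q, G.Adj u q ∧ ∀ z, z ≠ v → G.Adj z u ∨ G.Adj z q) ∨
        (∃ q, G.Adj v q ∧ ∀ z, z ≠ u → G.Adj z v ∨ G.Adj z q) := by
      intro p' q' hpq' hadj' hdom' hp'
      rcases hp' with rfl | rfl
      · -- p' = u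
        by_cases hqv : q' = v
        · subst hqv
          left
          intro z hzu hzv
          rcases hdom' z with h | h
          · rcases dec z p' h with h' | ⟨h', _⟩ | ⟨h', _⟩
            · exact Or.inl h'
            · exact absurd h' hzu
            · exact absurd h' hzv
          · rcases dec z q' h with h' | ⟨h', _⟩ | ⟨h', _⟩
            · exact Or.inr h'
            · exact absurd h' hzu
            · exact absurd h' hzv
        · right; left
          refine ⟨q', ?_, ?_⟩
          · rcases dec p' q' hadj' with h | ⟨_, h⟩ | ⟨h, _⟩
            · exact h
            · exact absurd h hqv
            · exact absurd h hne
          · intro z hzv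
            rcases hdom' z with h | h
            · rcases dec z p' h with h' | ⟨h', hpv⟩ | ⟨h', _⟩
              · exact Or.inl h'
              · exact absurd hpv hne
              · exact absurd h' hzv
            · rcases dec z q' h with h' | ⟨_, h'⟩ | ⟨_, h'⟩
              · exact Or.inr h'
              · exact absurd h' hqv
              · exact absurd h'.symm hpq'
      · -- p' = v
        by_cases hqu : q' = u
        · subst hqu
          left
          intro z hzu hzv
          rcases hdom' z with h | h
          · rcases dec z p' h with h' | ⟨h', _⟩ | ⟨h', _⟩
            · exact Or.inr h'
            · exact absurd h' hzu
            · exact absurd h' hzv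
          · rcases dec z q' h with h' | ⟨h', _⟩ | ⟨h', _⟩
            · exact Or.inl h'
            · exact absurd h' hzu
            · exact absurd h' hzv
        · right; right
          refine ⟨q', ?_, ?_⟩
          · rcases dec p' q' hadj' with h | ⟨h, _⟩ | ⟨_, h⟩
            · exact h
            · exact absurd h.symm hne
            · exact absurd h hqu
          · intro z hzu
            rcases hdom' z with h | h
            · rcases dec z p' h with h' | ⟨h', _⟩ | ⟨h', hpu⟩
              · exact Or.inl h'
              · exact absurd h' hzu
              · exact absurd hpu hne.symm
            · rcases dec z q' h with h' | ⟨_, h'⟩ | ⟨_, h'⟩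
              · exact Or.inr h'
              · exact absurd h'.symm hpq'
              · exact absurd h' hqu
    by_cases hp : p = u ∨ p = v
    · exact main p q hpq hadj hdom hp
    · push_neg at hp
      have hq : q = u ∨ q = v := by
        by_contra hq
        push_neg at hq
        exact hq.2 (hpuv hp.1 hp.2 hq.1)
      exact main q p hpq.symm hadj.symm (fun z => (hdom z).symm) hq


def Wp (x y v : V) : Prop := v ≠ x ∧ v ≠ y

def Rch (G : SimpleGraph V) (x y a b : V) : Prop :=
  ∃ p : G.Walk a b, ∀ z ∈ p.support, Wp x y z

lemma rch_refl {x y a : V} (h : Wp x y a) : Rch G x y a a :=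
  ⟨SimpleGraph.Walk.nil, by simp [h]⟩

lemma rch_symm {x y a b : V} (h : Rch G x y a b) : Rch G x y b a := by
  obtain ⟨p, hp⟩ := h
  exact ⟨p.reverse, fun z hz => hp z (by
    rw [SimpleGraph.Walk.support_reverse, List.mem_reverse] at hz; exact hz)⟩

lemma rch_trans {x y a b c : V} (h1 : Rch G x y a b) (h2 : Rch G x y b c) :
    Rch G x y a c := by
  obtain ⟨p, hp⟩ := h1
  obtain ⟨q, hq⟩ := h2
  refine ⟨p.append q, fun z hz => ?_⟩
  rw [SimpleGraph.Walk.support_append, List.mem_append] at hz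
  rcases hz with hz | hz
  · exact hp z hz
  · exact hq z (List.mem_of_mem_tail hz)

lemma rch_adj {x y a b : V} (ha : Wp x y a) (hb : Wp x y b) (h : G.Adj a b) :
    Rch G x y a b :=
  ⟨SimpleGraph.Walk.cons h SimpleGraph.Walk.nil, by
    intro z hz
    simp only [SimpleGraph.Walk.support_cons, SimpleGraph.Walk.support_nil,
      List.mem_cons, List.mem_singleton] at hz
    rcases hz with rfl | rfl | h'
    · exact ha
    · exact hb
    · exact absurd h' (List.not_mem_nil)⟩

lemma wp_iff_mem {x y v : V} : Wp x y v ↔ v ∈ (({x, y} : Set V)ᶜ) := by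
  simp [Wp, Set.mem_compl_iff]

lemma toInduced {s : Set V} {a b : V} (p : G.Walk a b) :
    ∀ (_ : ∀ z ∈ p.support, z ∈ s) (ha : a ∈ s) (hb : b ∈ s),
      (G.induce s).Reachable ⟨a, ha⟩ ⟨b, hb⟩ := by
  induction p with
  | nil => intro _ _ _; exact Reachable.refl _
  | @cons a' b' c' h q ih =>
    intro hp ha hb
    have hb' : b' ∈ s := hp b' (by
      rw [Walk.support_cons]
      exact List.mem_cons_of_mem _ q.start_mem_support)
    have hadj : (G.induce s).Adj ⟨a', ha⟩ ⟨b', hb'⟩ := by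
      simp only [comap_adj, Function.Embedding.coe_subtype]
      exact h
    exact (hadj.reachable).trans (ih (fun z hz => hp z (by
      rw [Walk.support_cons]; exact List.mem_cons_of_mem _ hz)) hb' hb)


lemma rch_to_reachable {x y : V} {a b : V} (ha : Wp x y a) (hb : Wp x y b)
    (h : Rch G x y a b) :
    (G.induce (({x, y} : Set V)ᶜ)).Reachable ⟨a, wp_iff_mem.mp ha⟩ ⟨b, wp_iff_mem.mp hb⟩ := by
  obtain ⟨p, hp⟩ := h
  exact toInduced p (fun z hz => wp_iff_mem.mp (hp z hz)) _ _

lemma removal_witness {x y : V} (h : RemovalDisconnects G ({x, y} : Set V)) :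
    ∃ a b : V, Wp x y a ∧ Wp x y b ∧ ¬Rch G x y a b := by
  obtain ⟨a, b, hnr⟩ := h
  refine ⟨a.val, b.val, wp_iff_mem.mpr a.prop, wp_iff_mem.mpr b.prop, ?_⟩
  intro hr
  exact hnr (by
    have := rch_to_reachable (wp_iff_mem.mpr a.prop) (wp_iff_mem.mpr b.prop) hr
    convert this)
end Stmt19Aux

open Stmt19Aux SimpleGraph Finset in
/-- A 3-γₜ-edge-critical graph of diameter two on n vertices
with vertex connectivity two has fewer than ⌊n²/4⌋ missing edges. -/
theorem stmt19 {V : Type*} [Fintype V] [DecidableEq V] (G : SimpleGraph V)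
    (hcrit : Critical3 G) (hconn : G.Connected) (hdiam : DiamTwo G)
    (hnocut : ∀ v : V, ¬ RemovalDisconnects G {v})
    (hcut2 : ∃ x y : V, x ≠ y ∧ RemovalDisconnects G {x, y}) :
    Gᶜ.edgeSet.ncard < Fintype.card V ^ 2 / 4 := by
  classical
  obtain ⟨h3, hcrit2⟩ := hcrit
  obtain ⟨hdiam1, -⟩ := hdiam
  obtain ⟨x, y, hxy, hcut⟩ := hcut2
  obtain ⟨a0, b0, hWa0, hWb0, hnr⟩ := removal_witness hcut
  -- F1 : every vertex outside {x,y} is adjacent to x or y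
  have F1 : ∀ v, Wp x y v → G.Adj v x ∨ G.Adj v y := by
    intro v hv
    obtain ⟨z0, hWz0, hnrz⟩ : ∃ z0, Wp x y z0 ∧ ¬Rch G x y v z0 := by
      by_cases hra : Rch G x y v a0
      · refine ⟨b0, hWb0, fun hrb => hnr ?_⟩
        exact rch_trans (rch_symm hra) hrb
      · exact ⟨a0, hWa0, hra⟩
    have hne : v ≠ z0 := by rintro rfl; exact hnrz (rch_refl hv)
    have hnadj : ¬G.Adj v z0 := fun h => hnrz (rch_adj hv hWz0 h)
    rcases hdiam1 v z0 hne with h | ⟨w, hw1, hw2⟩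
    · exact absurd h hnadj
    · by_cases hww : Wp x y w
      · exact absurd (rch_trans (rch_adj hv hww hw1) (rch_adj hww hWz0 hw2)) hnrz
      · rcases not_and_or.mp hww with h | h
        · push_neg at h; subst h; exact Or.inl hw1
        · push_neg at h; subst h; exact Or.inr hw1
  -- F2 : x and y are not adjacent
  have F2 : ¬G.Adj x y := by
    intro hadj
    obtain ⟨z, hz1, hz2⟩ := no2TDS h3 hadj
    have hzx : z ≠ x := by rintro rfl; exact hz2 hadj
    have hzy : z ≠ y := by rintro rfl; exact hz1 hadj.symm
    rcases F1 z ⟨hzx, hzy⟩ with h | h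
    · exact hz1 h
    · exact hz2 h
  -- neighbors of x and y
  obtain ⟨tx, htx⟩ : ∃ t, G.Adj x t := by
    obtain ⟨w⟩ := hconn.preconnected x y
    cases w with
    | nil => exact absurd rfl hxy
    | cons h _ => exact ⟨_, h⟩
  obtain ⟨ty, hty⟩ : ∃ t, G.Adj y t := by
    obtain ⟨w⟩ := hconn.preconnected y x
    cases w with
    | nil => exact absurd rfl hxy.symm
    | cons h _ => exact ⟨_, h⟩
  -- F3 : there exist x-only and y-only vertices
  obtain ⟨us, hWus, husx, husy⟩ : ∃ u, Wp x y u ∧ G.Adj u x ∧ ¬G.Adj u y := by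
    by_contra hno
    push_neg at hno
    have hall : ∀ u, Wp x y u → G.Adj u y := by
      intro u hu
      rcases F1 u hu with h | h
      · exact hno u hu h
      · exact h
    have h1 : tx ≠ x := htx.ne'
    have h2 : tx ≠ y := by rintro rfl; exact F2 htx
    have h3' : G.Adj tx y := hall tx ⟨h1, h2⟩
    have hdom : ∀ z, G.Adj z y ∨ G.Adj z tx := by
      intro z
      by_cases hzx : z = x
      · subst hzx; exact Or.inr htx
      · by_cases hzy : z = y
        · subst hzy; exact Or.inr h3'.symm
        · exact Or.inl (hall z ⟨hzx, hzy⟩)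
    have := gammaT_le_two h3'.symm hdom
    rw [h3] at this
    exact absurd this (by norm_num)
  obtain ⟨vs, hWvs, hvsy, hvsx⟩ : ∃ u, Wp x y u ∧ G.Adj u y ∧ ¬G.Adj u x := by
    by_contra hno
    push_neg at hno
    have hall : ∀ u, Wp x y u → G.Adj u x := by
      intro u hu
      rcases F1 u hu with h | h
      · exact h
      · exact hno u hu h
    have h1 : ty ≠ y := hty.ne'
    have h2 : ty ≠ x := by rintro rfl; exact F2 hty.symm
    have h3' : G.Adj ty x := hall ty ⟨h2, h1⟩
    have hdom : ∀ z, G.Adj z x ∨ G.Adj z ty := by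
      intro z
      by_cases hzy : z = y
      · subst hzy; exact Or.inr hty
      · by_cases hzx : z = x
        · subst hzx; exact Or.inr h3'.symm
        · exact Or.inl (hall z ⟨hzx, hzy⟩)
    have := gammaT_le_two h3'.symm hdom
    rw [h3] at this
    exact absurd this (by norm_num)
  -- us and vs are in the same component
  have husvs : us ≠ vs := by rintro rfl; exact hvsx husx
  have huv : Rch G x y us vs := by
    by_contra hnr'
    have hnadj : ¬G.Adj us vs := fun h => hnr' (rch_adj hWus hWvs h)
    rcases hdiam1 us vs husvs with h | ⟨w, hw1, hw2⟩
    · exact hnadj h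
    · by_cases hww : Wp x y w
      · exact hnr' (rch_trans (rch_adj hWus hww hw1) (rch_adj hww hWvs hw2))
      · rcases not_and_or.mp hww with h | h
        · push_neg at h; subst h; exact hvsx hw2.symm
        · push_neg at h; subst h; exact husy hw1
  -- the component K and the rest R
  set KP : V → Prop := fun v => Wp x y v ∧ Rch G x y us v with hKP
  set RP : V → Prop := fun v => Wp x y v ∧ ¬Rch G x y us v with hRP
  have hKus : KP us := ⟨hWus, rch_refl hWus⟩
  have hKvs : KP vs := ⟨hWvs, huv⟩
  have hclass : ∀ v, Wp x y v → KP v ∨ RP v := by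
    intro v hv
    by_cases h : Rch G x y us v
    · exact Or.inl ⟨hv, h⟩
    · exact Or.inr ⟨hv, h⟩
  have hcross : ∀ v w, KP v → RP w → ¬G.Adj v w := by
    intro v w hv hw hadj
    exact hw.2 (rch_trans hv.2 (rch_adj hv.1 hw.1 hadj))
  have hKRne : ∀ v w, KP v → RP w → v ≠ w := by
    rintro v w hv hw rfl
    exact hw.2 hv.2
  have hKadj : ∀ v w, KP v → G.Adj v w → Wp x y w → KP w := by
    intro v w hv hadj hw
    exact ⟨hw, rch_trans hv.2 (rch_adj hv.1 hw hadj)⟩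
  have hRne : ∃ c0, RP c0 := by
    by_cases hra : Rch G x y us a0
    · refine ⟨b0, hWb0, fun hrb => hnr ?_⟩
      exact rch_trans (rch_symm hra) hrb
    · exact ⟨a0, hWa0, hra⟩
  -- Claim A : every vertex of R is adjacent to both x and y
  have claimA : ∀ w, RP w → G.Adj w x ∧ G.Adj w y := by
    intro w hw
    constructor
    · have hne : w ≠ us := (hKRne us w hKus hw).symm
      have hnadj : ¬G.Adj w us := fun h => hcross us w hKus hw h.symm
      rcases hdiam1 w us hne with h | ⟨t, ht1, ht2⟩
      · exact absurd h hnadj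
      · by_cases htt : Wp x y t
        · exact absurd ht1.symm (hcross t w (hKadj us t hKus ht2.symm htt) hw)
        · rcases not_and_or.mp htt with h | h
          · push_neg at h; subst h; exact ht1
          · push_neg at h; subst h; exact absurd ht2.symm husy
    · have hne : w ≠ vs := (hKRne vs w hKvs hw).symm
      have hnadj : ¬G.Adj w vs := fun h => hcross vs w hKvs hw h.symm
      rcases hdiam1 w vs hne with h | ⟨t, ht1, ht2⟩
      · exact absurd h hnadj
      · by_cases htt : Wp x y t
        · exact absurd ht1.symm (hcross t w (hKadj vs t hKvs ht2.symm htt) hw)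
        · rcases not_and_or.mp htt with h | h
          · push_neg at h; subst h; exact absurd ht2.symm hvsx
          · push_neg at h; subst h; exact ht1
  -- contradiction helper : a 2-TDS contradicts gammaT = 3
  have noTDS : ∀ p q : V, G.Adj p q → (∀ z, G.Adj z p ∨ G.Adj z q) → False := by
    intro p q hpq hdom
    have := gammaT_le_two hpq hdom
    rw [h3] at this
    exact absurd this (by norm_num)
  -- Standard Form lemma for nonadjacent pairs inside K
  have SF : ∀ s t, KP s → KP t → s ≠ t → ¬G.Adj s t →
      ∃ d e r, ((d = s ∧ e = t) ∨ (d = t ∧ e = s)) ∧ (r = x ∨ r = y) ∧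
        G.Adj d x ∧ G.Adj d y ∧ G.Adj d r ∧ ¬G.Adj e r ∧
        (∀ z, z ≠ e → G.Adj z d ∨ G.Adj z r) := by
    intro s t hKs hKt hst hnadj
    obtain ⟨c0, hc0⟩ := hRne
    have hc0s : c0 ≠ s := (hKRne s c0 hKs hc0).symm
    have hc0t : c0 ≠ t := (hKRne t c0 hKt hc0).symm
    -- a sub-helper applying to either orientation
    have sub : ∀ s' t', KP s' → KP t' → s' ≠ t' → ¬G.Adj s' t' →
        (∃ q, G.Adj s' q ∧ ∀ z, z ≠ t' → G.Adj z s' ∨ G.Adj z q) →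
        ∃ r, (r = x ∨ r = y) ∧ G.Adj s' x ∧ G.Adj s' y ∧ G.Adj s' r ∧ ¬G.Adj t' r ∧
          (∀ z, z ≠ t' → G.Adj z s' ∨ G.Adj z r) := by
      intro s' t' hKs' hKt' hst' hnadj' ⟨q, hq, hD⟩
      have hc0s' : c0 ≠ s' := (hKRne s' c0 hKs' hc0).symm
      have hc0t' : c0 ≠ t' := (hKRne t' c0 hKt' hc0).symm
      have hc0q : G.Adj c0 q := by
        rcases hD c0 hc0t' with h | h
        · exact absurd h (fun hh => hcross s' c0 hKs' hc0 hh.symm)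
        · exact h
      have hqxy : q = x ∨ q = y := by
        by_contra hq'
        push_neg at hq'
        have hKq : KP q := hKadj s' q hKs' hq ⟨hq'.1, hq'.2⟩
        exact hcross q c0 hKq hc0 hc0q.symm
      have hntr : ¬G.Adj t' q := by
        intro hadj
        refine noTDS s' q hq ?_
        intro z
        by_cases hzt : z = t'
        · subst hzt; exact Or.inr hadj
        · exact hD z hzt
      -- s' is adjacent to both x and y
      have hsxy : G.Adj s' x ∧ G.Adj s' y := by
        rcases hqxy with rfl | rfl
        · refine ⟨hq, ?_⟩
          have hyne : y ≠ t' := fun h => (hKt'.1.2 h.symm)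
          rcases hD y hyne with h | h
          · exact h.symm
          · exact absurd h.symm F2
        · refine ⟨?_, hq⟩
          have hxne : x ≠ t' := fun h => (hKt'.1.1 h.symm)
          rcases hD x hxne with h | h
          · exact h.symm
          · exact absurd h F2
      exact ⟨q, hqxy, hsxy.1, hsxy.2, hq, hntr, hD⟩
    rcases trichotomy h3 hcrit2 hst hnadj with hA | hB | hB
    · exfalso
      rcases hA c0 hc0s hc0t with h | h
      · exact hcross s c0 hKs hc0 h.symm
      · exact hcross t c0 hKt hc0 h.symm
    · obtain ⟨r, hr, h1, h2, h3', h4, h5⟩ := sub s t hKs hKt hst hnadj hB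
      exact ⟨s, t, r, Or.inl ⟨rfl, rfl⟩, hr, h1, h2, h3', h4, h5⟩
    · obtain ⟨r, hr, h1, h2, h3', h4, h5⟩ := sub t s hKt hKs hst.symm
        (fun h => hnadj h.symm) hB
      exact ⟨t, s, r, Or.inr ⟨rfl, rfl⟩, hr, h1, h2, h3', h4, h5⟩
  -- R is a clique
  have hRcl : ∀ w w', RP w → RP w' → w ≠ w' → G.Adj w w' := by
    intro w w' hw hw' hne
    by_contra hna
    have subR : ∀ w1 w2, RP w1 → RP w2 → w1 ≠ w2 → ¬G.Adj w1 w2 →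
        (∃ q, G.Adj w1 q ∧ ∀ z, z ≠ w2 → G.Adj z w1 ∨ G.Adj z q) → False := by
      intro w1 w2 hw1 hw2 hne12 hna12 ⟨q, hq, hD⟩
      have husw2 : us ≠ w2 := hKRne us w2 hKus hw2
      have husq : G.Adj us q := by
        rcases hD us husw2 with h | h
        · exact absurd h (hcross us w1 hKus hw1)
        · exact h
      have hqx : q = x := by
        by_cases hqq : Wp x y q
        · exfalso
          exact hcross q w1 (hKadj us q hKus husq hqq) hw1 hq.symm
        · rcases not_and_or.mp hqq with h | h
          · push_neg at h; exact h
          · push_neg at h; subst h; exact absurd husq husy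
      subst hqx
      have hvsw2 : vs ≠ w2 := hKRne vs w2 hKvs hw2
      rcases hD vs hvsw2 with h | h
      · exact hcross vs w1 hKvs hw1 h
      · exact hvsx h
    rcases trichotomy h3 hcrit2 hne hna with hA | hB | hB
    · rcases hA us (hKRne us w hKus hw) (hKRne us w' hKus hw') with h | h
      · exact hcross us w hKus hw h
      · exact hcross us w' hKus hw' h
    · exact subR w w' hw hw' hne hna hB
    · exact subR w' w hw' hw hne.symm (fun h => hna h.symm) hB
  by_cases hKcl : ∀ s t, KP s → KP t → s ≠ t → G.Adj s t
  · -- CASE 1 : K is a clique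
    set Kf : Finset V := Finset.univ.filter KP with hKf
    set Rf : Finset V := Finset.univ.filter RP with hRf
    set Tx : Finset V := Kf.filter (fun z => ¬G.Adj z x) with hTx
    set Ty : Finset V := Kf.filter (fun z => ¬G.Adj z y) with hTy
    have hmemK : ∀ v, v ∈ Kf ↔ KP v := by intro v; simp [hKf]
    have hmemR : ∀ v, v ∈ Rf ↔ RP v := by intro v; simp [hRf]
    have huniv : ∀ v : V, v = x ∨ v = y ∨ KP v ∨ RP v := by
      intro v
      by_cases hv : Wp x y v
      · rcases hclass v hv with h | h
        · exact Or.inr (Or.inr (Or.inl h))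
        · exact Or.inr (Or.inr (Or.inr h))
      · rcases not_and_or.mp hv with h | h
        · push_neg at h; exact Or.inl h
        · push_neg at h; exact Or.inr (Or.inl h)
    have hxKf : x ∉ Kf := by rw [hmemK]; exact fun h => h.1.1 rfl
    have hyKf : y ∉ Kf := by rw [hmemK]; exact fun h => h.1.2 rfl
    have hxRf : x ∉ Rf := by rw [hmemR]; exact fun h => h.1.1 rfl
    have hyRf : y ∉ Rf := by rw [hmemR]; exact fun h => h.1.2 rfl
    have hdisjKR : Disjoint Kf Rf := by
      rw [Finset.disjoint_left]
      intro z hz1 hz2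
      rw [hmemK] at hz1
      rw [hmemR] at hz2
      exact hz2.2 hz1.2
    have hn : Fintype.card V = Kf.card + Rf.card + 2 := by
      have huniveq : (Finset.univ : Finset V) = insert x (insert y (Kf ∪ Rf)) := by
        symm
        rw [Finset.eq_univ_iff_forall]
        intro v
        rcases huniv v with rfl | rfl | h | h
        · simp
        · simp
        · simp only [Finset.mem_insert, Finset.mem_union, hmemK v]
          tauto
        · simp only [Finset.mem_insert, Finset.mem_union, hmemR v]
          tauto
      rw [← Finset.card_univ, huniveq]
      rw [Finset.card_insert_of_notMem (by simp [hxy, hxKf, hxRf]),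
          Finset.card_insert_of_notMem (by simp [hyKf, hyRf]),
          Finset.card_union_of_disjoint hdisjKR]
    set E1 : Finset (Sym2 V) := {s(x, y)} with hE1
    set E2 : Finset (Sym2 V) := (Kf ×ˢ Rf).image (fun pr => s(pr.1, pr.2)) with hE2
    set E3 : Finset (Sym2 V) := Tx.image (fun z => s(x, z)) with hE3
    set E4 : Finset (Sym2 V) := Ty.image (fun z => s(y, z)) with hE4
    set EBig : Finset (Sym2 V) := E1 ∪ E2 ∪ E3 ∪ E4 with hEBig
    have cov : ∀ z w : V, z ≠ w → ¬G.Adj z w → s(z, w) ∈ EBig := by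
      intro z w hne hnadj
      simp only [hEBig, Finset.mem_union]
      rcases huniv z with rfl | rfl | hKz | hRz
      · rcases huniv w with rfl | rfl | hKw | hRw
        · exact absurd rfl hne
        · exact Or.inl (Or.inl (Or.inl (by simp [hE1])))
        · refine Or.inl (Or.inr ?_)
          rw [hE3]
          exact Finset.mem_image.mpr ⟨w, by
            rw [hTx, Finset.mem_filter, hmemK]
            exact ⟨hKw, fun h => hnadj h.symm⟩, rfl⟩
        · exact absurd (claimA w hRw).1.symm hnadj
      · rcases huniv w with rfl | rfl | hKw | hRw
        · refine Or.inl (Or.inl (Or.inl ?_))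
          rw [hE1, Sym2.eq_swap]; simp
        · exact absurd rfl hne
        · refine Or.inr ?_
          rw [hE4]
          exact Finset.mem_image.mpr ⟨w, by
            rw [hTy, Finset.mem_filter, hmemK]
            exact ⟨hKw, fun h => hnadj h.symm⟩, rfl⟩
        · exact absurd (claimA w hRw).2.symm hnadj
      · rcases huniv w with rfl | rfl | hKw | hRw
        · refine Or.inl (Or.inr ?_)
          rw [hE3, Sym2.eq_swap]
          exact Finset.mem_image.mpr ⟨z, by
            rw [hTx, Finset.mem_filter, hmemK]
            exact ⟨hKz, hnadj⟩, rfl⟩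
        · refine Or.inr ?_
          rw [hE4, Sym2.eq_swap]
          exact Finset.mem_image.mpr ⟨z, by
            rw [hTy, Finset.mem_filter, hmemK]
            exact ⟨hKz, hnadj⟩, rfl⟩
        · exact absurd (hKcl z w hKz hKw hne) hnadj
        · refine Or.inl (Or.inl (Or.inr ?_))
          rw [hE2]
          exact Finset.mem_image.mpr ⟨(z, w), Finset.mem_product.mpr
            ⟨(hmemK z).mpr hKz, (hmemR w).mpr hRw⟩, rfl⟩
      · rcases huniv w with rfl | rfl | hKw | hRw
        · exact absurd (claimA z hRz).1 hnadj
        · exact absurd (claimA z hRz).2 hnadj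
        · refine Or.inl (Or.inl (Or.inr ?_))
          rw [hE2, Sym2.eq_swap]
          exact Finset.mem_image.mpr ⟨(w, z), Finset.mem_product.mpr
            ⟨(hmemK w).mpr hKw, (hmemR z).mpr hRz⟩, rfl⟩
        · exact absurd (hRcl z w hRz hRw hne) hnadj
    have hsub : Gᶜ.edgeSet.toFinset ⊆ EBig := by
      intro e he
      rw [Set.mem_toFinset] at he
      induction e with
      | h z w =>
        rw [SimpleGraph.mem_edgeSet, SimpleGraph.compl_adj] at he
        exact cov z w he.1 he.2
    have hMbound : Gᶜ.edgeSet.toFinset.card ≤ 1 + Kf.card * Rf.card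
        + Tx.card + Ty.card := by
      calc Gᶜ.edgeSet.toFinset.card ≤ EBig.card := Finset.card_le_card hsub
        _ ≤ E1.card + E2.card + E3.card + E4.card := by
            rw [hEBig]
            calc (E1 ∪ E2 ∪ E3 ∪ E4).card
                ≤ (E1 ∪ E2 ∪ E3).card + E4.card := Finset.card_union_le _ _
              _ ≤ (E1 ∪ E2).card + E3.card + E4.card := by
                  have := Finset.card_union_le (E1 ∪ E2) E3
                  omega
              _ ≤ E1.card + E2.card + E3.card + E4.card := by
                  have := Finset.card_union_le E1 E2
                  omega
        _ ≤ 1 + Kf.card * Rf.card + Tx.card + Ty.card := by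
            have h1 : E1.card = 1 := by rw [hE1]; rfl
            have h2 : E2.card ≤ Kf.card * Rf.card := by
              calc E2.card ≤ (Kf ×ˢ Rf).card := Finset.card_image_le
                _ = Kf.card * Rf.card := Finset.card_product _ _
            have h3 : E3.card ≤ Tx.card := Finset.card_image_le
            have h4 : E4.card ≤ Ty.card := Finset.card_image_le
            omega
    have hsum : Tx.card + Ty.card ≤ Kf.card := by
      have hd1 : Disjoint Tx Ty := by
        rw [Finset.disjoint_left]
        intro z hz1 hz2
        rw [hTx, Finset.mem_filter, hmemK] at hz1
        rw [hTy, Finset.mem_filter] at hz2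
        rcases F1 z hz1.1.1 with h | h
        · exact hz1.2 h
        · exact hz2.2 h
      calc Tx.card + Ty.card = (Tx ∪ Ty).card :=
            (Finset.card_union_of_disjoint hd1).symm
        _ ≤ Kf.card := Finset.card_le_card (by
            intro z hz
            rcases Finset.mem_union.mp hz with h | h
            · exact Finset.filter_subset _ _ h
            · exact Finset.filter_subset _ _ h)
    have hr1 : 1 ≤ Rf.card := by
      obtain ⟨c0, hc0⟩ := hRne
      exact Finset.card_pos.mpr ⟨c0, (hmemR c0).mpr hc0⟩
    have hfin : Gᶜ.edgeSet.toFinset.card + 1 ≤ 2 + Kf.card * Rf.card + Kf.card := by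
      omega
    have harith : (2 + Kf.card * Rf.card + Kf.card) * 4 ≤ (Kf.card + Rf.card + 2) ^ 2 := by
      zify
      nlinarith [sq_nonneg ((Kf.card : ℤ) - (Rf.card : ℤ)), hr1]
    rw [Set.ncard_eq_toFinset_card', hn]
    have : Gᶜ.edgeSet.toFinset.card + 1 ≤ (Kf.card + Rf.card + 2) ^ 2 / 4 := by
      rw [Nat.le_div_iff_mul_le (by norm_num)]
      calc (Gᶜ.edgeSet.toFinset.card + 1) * 4
          ≤ (2 + Kf.card * Rf.card + Kf.card) * 4 := by omega
        _ ≤ (Kf.card + Rf.card + 2) ^ 2 := harith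
    omega
  · -- CASE 2 : K has a nonadjacent pair
    push_neg at hKcl
    obtain ⟨a, b, hKa, hKb, hab, hnab⟩ := hKcl
    obtain ⟨d, e, r, hde, hr, hdx, hdy, hdr, hner, hD⟩ := SF a b hKa hKb hab hnab
    have hKd : KP d := by rcases hde with ⟨rfl, _⟩ | ⟨rfl, _⟩ <;> assumption
    have hKe : KP e := by rcases hde with ⟨_, rfl⟩ | ⟨_, rfl⟩ <;> assumption
    have hned : ¬G.Adj e d := by
      rcases hde with ⟨rfl, rfl⟩ | ⟨rfl, rfl⟩
      · exact fun h => hnab h.symm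
      · exact hnab
    have hde' : d ≠ e := by
      rcases hde with ⟨rfl, rfl⟩ | ⟨rfl, rfl⟩
      · exact hab
      · exact hab.symm
    -- R is a singleton {c}
    have hRsub : ∀ c', RP c' → ∀ w, RP w → w = c' := by
      intro c' hc' w hw
      by_contra hwc
      have hdc' : d ≠ c' := hKRne d c' hKd hc'
      have hnadc : ¬G.Adj d c' := hcross d c' hKd hc'
      have hec' : e ≠ c' := hKRne e c' hKe hc'
      rcases trichotomy h3 hcrit2 hdc' hnadc with hA | ⟨q, hq, hDq⟩ | ⟨q, hq, hDq⟩
      · rcases hA e hde'.symm hec' with h | h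
        · exact hned h
        · exact hcross e c' hKe hc' h
      · -- q adjacent to d
        have heq : G.Adj e q := by
          rcases hDq e hec' with h | h
          · exact absurd h hned
          · exact h
        by_cases hqq : Wp x y q
        · -- q in K : then w kills it
          have hKq : KP q := hKadj d q hKd hq hqq
          rcases hDq w hwc with h | h
          · exact hcross d w hKd hw h.symm
          · exact hcross q w hKq hw h.symm
        · -- q = x or y : TDS {d,q}
          have hqxy : q = x ∨ q = y := by
            rcases not_and_or.mp hqq with h | h
            · push_neg at h; exact Or.inl h
            · push_neg at h; exact Or.inr h
          refine noTDS d q hq ?_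
          intro z
          by_cases hzc : z = c'
          · subst hzc
            rcases hqxy with rfl | rfl
            · exact Or.inr (claimA z hc').1
            · exact Or.inr (claimA z hc').2
          · exact hDq z hzc
      · -- q adjacent to c'
        have heq : G.Adj e q := by
          rcases hDq e (fun h => hde' h.symm) with h | h
          · exact absurd h (fun hh => hcross e c' hKe hc' hh)
          · exact h
        have hqxy : q = x ∨ q = y := by
          by_contra hq'
          push_neg at hq'
          have hKq : KP q := hKadj e q hKe heq ⟨hq'.1, hq'.2⟩
          exact hcross q c' hKq hc' hq.symm
        rcases hqxy with rfl | rfl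
        · -- q = x : vs kills it
          have hvsd : vs ≠ d := by rintro rfl; exact hvsx hdx
          rcases hDq vs hvsd with h | h
          · exact hcross vs c' hKvs hc' h
          · exact hvsx h
        · -- q = y : us kills it
          have husd : us ≠ d := by rintro rfl; exact husy hdy
          rcases hDq us husd with h | h
          · exact hcross us c' hKus hc' h
          · exact husy h
    obtain ⟨c, hc⟩ := hRne
    have hRc : ∀ w, RP w → w = c := hRsub c hc
    have hcx : G.Adj c x := (claimA c hc).1
    have hcy : G.Adj c y := (claimA c hc).2
    have hNc : ∀ t, G.Adj c t → t = x ∨ t = y := by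
      intro t hadj
      by_cases htt : Wp x y t
      · rcases hclass t htt with h | h
        · exact absurd hadj.symm (hcross t c h hc)
        · have := hRc t h
          subst this
          exact absurd hadj (G.irrefl)
      · rcases not_and_or.mp htt with h | h
        · push_neg at h; exact Or.inl h
        · push_neg at h; exact Or.inr h
    -- partition of K into A, B, P
    set AP : V → Prop := fun v => KP v ∧ G.Adj v x ∧ ¬G.Adj v y with hAP
    set BP : V → Prop := fun v => KP v ∧ G.Adj v y ∧ ¬G.Adj v x with hBP
    set PP : V → Prop := fun v => KP v ∧ G.Adj v x ∧ G.Adj v y with hPP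
    have hABP : ∀ v, KP v → AP v ∨ BP v ∨ PP v := by
      intro v hv
      rcases F1 v hv.1 with h | h
      · by_cases h' : G.Adj v y
        · exact Or.inr (Or.inr ⟨hv, h, h'⟩)
        · exact Or.inl ⟨hv, h, h'⟩
      · by_cases h' : G.Adj v x
        · exact Or.inr (Or.inr ⟨hv, h', h⟩)
        · exact Or.inr (Or.inl ⟨hv, h, h'⟩)
    -- every missing pair inside K has P-vertex and A∪B-vertex
    have missK : ∀ s t, KP s → KP t → s ≠ t → ¬G.Adj s t →
        (PP s ∧ (AP t ∨ BP t)) ∨ (PP t ∧ (AP s ∨ BP s)) := by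
      intro s t hKs hKt hst hnadj
      obtain ⟨d', e', r', hde'', hr', hdx', hdy', hdr', hner', hD'⟩ :=
        SF s t hKs hKt hst hnadj
      have hKd' : KP d' := by rcases hde'' with ⟨rfl, _⟩ | ⟨rfl, _⟩ <;> assumption
      have hKe' : KP e' := by rcases hde'' with ⟨_, rfl⟩ | ⟨_, rfl⟩ <;> assumption
      have hPd' : PP d' := ⟨hKd', hdx', hdy'⟩
      have hABe' : AP e' ∨ BP e' := by
        rcases hABP e' hKe' with h | h | h
        · exact Or.inl h
        · exact Or.inr h
        · exfalso
          rcases hr' with rfl | rfl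
          · exact hner' h.2.1
          · exact hner' h.2.2
      rcases hde'' with ⟨rfl, rfl⟩ | ⟨rfl, rfl⟩
      · exact Or.inl ⟨hPd', hABe'⟩
      · exact Or.inr ⟨hPd', hABe'⟩
    -- each vertex has at most one nonneighbor in A and in B
    have C8 : ∀ w z z', KP w → (AP z ∧ AP z') ∨ (BP z ∧ BP z') →
        ¬G.Adj w z → ¬G.Adj w z' → z ≠ z' → w ≠ z → w ≠ z' → False := by
      intro w z z' hKw hzz hwz hwz' hne hwz1 hwz2
      have hKz : KP z := by rcases hzz with ⟨h, _⟩ | ⟨h, _⟩ <;> exact h.1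
      obtain ⟨d', e', r', hde'', hr', hdx', hdy', hdr', hner', hD'⟩ :=
        SF w z hKw hKz hwz1 hwz
      have hdw : d' = w ∧ e' = z := by
        rcases hde'' with h | ⟨h1, h2⟩
        · exact h
        · exfalso
          subst h1
          rcases hzz with ⟨hz, _⟩ | ⟨hz, _⟩
          · exact hz.2.2 hdy'
          · exact hz.2.2 hdx'
      obtain ⟨rfl, rfl⟩ := hdw
      -- r' is the cut vertex NOT adjacent to the class of e'
      rcases hzz with ⟨hz, hz'⟩ | ⟨hz, hz'⟩
      · -- A-case : r' = y
        have hry : r' = y := by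
          rcases hr' with rfl | rfl
          · exact absurd hz.2.1 hner'
          · rfl
        subst hry
        rcases hD' z' hne.symm with h | h
        · exact hwz' h.symm
        · exact hz'.2.2 h
      · -- B-case : r' = x
        have hrx : r' = x := by
          rcases hr' with rfl | rfl
          · rfl
          · exact absurd hz.2.1 hner'
        subst hrx
        rcases hD' z' hne.symm with h | h
        · exact hwz' h.symm
        · exact hz'.2.2 h
    -- ### counting for CASE 2 ###
    set Kf : Finset V := Finset.univ.filter KP with hKf
    set Pf : Finset V := Finset.univ.filter PP with hPf
    set Tx : Finset V := Kf.filter (fun z => ¬G.Adj z x) with hTx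
    set Ty : Finset V := Kf.filter (fun z => ¬G.Adj z y) with hTy
    have hmemK : ∀ v, v ∈ Kf ↔ KP v := by
      intro v; simp [hKf]
    have hmemP : ∀ v, v ∈ Pf ↔ PP v := by
      intro v; simp [hPf]
    have huniv : ∀ v : V, v = x ∨ v = y ∨ v = c ∨ KP v := by
      intro v
      by_cases hv : Wp x y v
      · rcases hclass v hv with h | h
        · exact Or.inr (Or.inr (Or.inr h))
        · exact Or.inr (Or.inr (Or.inl (hRc v h)))
      · rcases not_and_or.mp hv with h | h
        · push_neg at h; exact Or.inl h
        · push_neg at h; exact Or.inr (Or.inl h)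
    have hxKf : x ∉ Kf := by
      rw [hmemK]; exact fun h => h.1.1 rfl
    have hyKf : y ∉ Kf := by
      rw [hmemK]; exact fun h => h.1.2 rfl
    have hcKf : c ∉ Kf := by
      rw [hmemK]; exact fun h => hc.2 h.2
    have hxc : x ≠ c := fun h => hc.1.1 h.symm
    have hyc : y ≠ c := fun h => hc.1.2 h.symm
    -- cardinality of V
    have hn : Fintype.card V = Kf.card + 3 := by
      have huniveq : (Finset.univ : Finset V) = insert x (insert y (insert c Kf)) := by
        symm
        rw [Finset.eq_univ_iff_forall]
        intro v
        rcases huniv v with rfl | rfl | rfl | h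
        · simp
        · simp
        · simp
        · simp only [Finset.mem_insert, hmemK v]
          tauto
      rw [← Finset.card_univ, huniveq]
      rw [Finset.card_insert_of_notMem (by simp [hxy, hxc, hxKf]),
          Finset.card_insert_of_notMem (by simp [hyc, hyKf]),
          Finset.card_insert_of_notMem hcKf]
    -- the five classes of missing edges
    set E1 : Finset (Sym2 V) := {s(x, y)} with hE1
    set E2 : Finset (Sym2 V) := Kf.image (fun z => s(c, z)) with hE2
    set E3 : Finset (Sym2 V) := Tx.image (fun z => s(x, z)) with hE3
    set E4 : Finset (Sym2 V) := Ty.image (fun z => s(y, z)) with hE4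
    set E5 : Finset (Sym2 V) :=
      Pf.biUnion (fun w => (Kf.filter (fun z => ¬G.Adj w z ∧ z ≠ w)).image
        (fun z => s(w, z))) with hE5
    set EBig : Finset (Sym2 V) := E1 ∪ E2 ∪ E3 ∪ E4 ∪ E5 with hEBig
    have cov : ∀ z w : V, z ≠ w → ¬G.Adj z w → s(z, w) ∈ EBig := by
      intro z w hne hnadj
      simp only [hEBig, Finset.mem_union]
      rcases huniv z with rfl | rfl | rfl | hKz
      · -- z = x
        rcases huniv w with rfl | rfl | rfl | hKw
        · exact absurd rfl hne
        · exact Or.inl (Or.inl (Or.inl (Or.inl (by simp [hE1]))))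
        · exact absurd hcx.symm hnadj
        · refine Or.inl (Or.inl (Or.inr ?_))
          rw [hE3]
          exact Finset.mem_image.mpr ⟨w, by
            rw [hTx, Finset.mem_filter, hmemK]
            exact ⟨hKw, fun h => hnadj h.symm⟩, rfl⟩
      · -- z = y
        rcases huniv w with rfl | rfl | rfl | hKw
        · refine Or.inl (Or.inl (Or.inl (Or.inl ?_)))
          rw [hE1, Sym2.eq_swap]
          simp
        · exact absurd rfl hne
        · exact absurd hcy.symm hnadj
        · refine Or.inl (Or.inr ?_)
          rw [hE4]
          exact Finset.mem_image.mpr ⟨w, by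
            rw [hTy, Finset.mem_filter, hmemK]
            exact ⟨hKw, fun h => hnadj h.symm⟩, rfl⟩
      · -- z = c
        rcases huniv w with rfl | rfl | rfl | hKw
        · exact absurd hcx hnadj
        · exact absurd hcy hnadj
        · exact absurd rfl hne
        · refine Or.inl (Or.inl (Or.inl (Or.inr ?_)))
          rw [hE2]
          exact Finset.mem_image.mpr ⟨w, (hmemK w).mpr hKw, rfl⟩
      · -- z in K
        rcases huniv w with rfl | rfl | rfl | hKw
        · refine Or.inl (Or.inl (Or.inr ?_))
          rw [hE3, Sym2.eq_swap]
          exact Finset.mem_image.mpr ⟨z, by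
            rw [hTx, Finset.mem_filter, hmemK]
            exact ⟨hKz, hnadj⟩, rfl⟩
        · refine Or.inl (Or.inr ?_)
          rw [hE4, Sym2.eq_swap]
          exact Finset.mem_image.mpr ⟨z, by
            rw [hTy, Finset.mem_filter, hmemK]
            exact ⟨hKz, hnadj⟩, rfl⟩
        · refine Or.inl (Or.inl (Or.inl (Or.inr ?_)))
          rw [hE2, Sym2.eq_swap]
          exact Finset.mem_image.mpr ⟨z, (hmemK z).mpr hKz, rfl⟩
        · -- both in K : class E5
          refine Or.inr ?_
          rw [hE5]
          rw [Finset.mem_biUnion]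
          rcases missK z w hKz hKw hne hnadj with ⟨hPz, _⟩ | ⟨hPw, _⟩
          · exact ⟨z, (hmemP z).mpr hPz, Finset.mem_image.mpr ⟨w, by
              rw [Finset.mem_filter, hmemK]
              exact ⟨hKw, hnadj, hne.symm⟩, rfl⟩⟩
          · refine ⟨w, (hmemP w).mpr hPw, Finset.mem_image.mpr ⟨z, by
              rw [Finset.mem_filter, hmemK]
              exact ⟨hKz, fun h => hnadj h.symm, hne⟩, Sym2.eq_swap⟩⟩
    -- the complement edge finset is contained in EBig
    have hsub : Gᶜ.edgeSet.toFinset ⊆ EBig := by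
      intro e he
      rw [Set.mem_toFinset] at he
      induction e with
      | h z w =>
        rw [SimpleGraph.mem_edgeSet, SimpleGraph.compl_adj] at he
        exact cov z w he.1 he.2
    -- cardinality bounds
    have hE5card : E5.card ≤ 2 * Pf.card := by
      calc E5.card ≤ ∑ w ∈ Pf, ((Kf.filter (fun z => ¬G.Adj w z ∧ z ≠ w)).image
          (fun z => s(w, z))).card := Finset.card_biUnion_le
        _ ≤ ∑ _w ∈ Pf, 2 := by
            apply Finset.sum_le_sum
            intro w hw
            have hPw : PP w := (hmemP w).mp hw
            calc ((Kf.filter (fun z => ¬G.Adj w z ∧ z ≠ w)).image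
                (fun z => s(w, z))).card
                ≤ (Kf.filter (fun z => ¬G.Adj w z ∧ z ≠ w)).card :=
                  Finset.card_image_le
              _ ≤ 2 := by
                  set Fw := Kf.filter (fun z => ¬G.Adj w z ∧ z ≠ w) with hFw
                  have hFsub : Fw ⊆ Fw.filter AP ∪ Fw.filter BP := by
                    intro z hz
                    rw [hFw, Finset.mem_filter, hmemK] at hz
                    obtain ⟨hKz, hnz, hzw⟩ := hz
                    rcases missK w z hPw.1 hKz (Ne.symm hzw) hnz with ⟨_, hAB⟩ | ⟨_, hAB⟩
                    · rcases hAB with h | h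
                      · exact Finset.mem_union_left _ (Finset.mem_filter.mpr
                          ⟨by rw [hFw, Finset.mem_filter, hmemK]; exact ⟨hKz, hnz, hzw⟩, h⟩)
                      · exact Finset.mem_union_right _ (Finset.mem_filter.mpr
                          ⟨by rw [hFw, Finset.mem_filter, hmemK]; exact ⟨hKz, hnz, hzw⟩, h⟩)
                    · exfalso
                      rcases hAB with h | h
                      · exact h.2.2 hPw.2.2
                      · exact h.2.2 hPw.2.1
                  have hA1 : (Fw.filter AP).card ≤ 1 := by
                    rw [Finset.card_le_one]
                    intro z1 h1 z2 h2
                    rw [Finset.mem_filter] at h1 h2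
                    obtain ⟨hz1, hA1'⟩ := h1
                    obtain ⟨hz2, hA2'⟩ := h2
                    rw [hFw, Finset.mem_filter] at hz1 hz2
                    by_contra hne12
                    exact C8 w z1 z2 hPw.1 (Or.inl ⟨hA1', hA2'⟩) hz1.2.1 hz2.2.1 hne12
                      (Ne.symm hz1.2.2) (Ne.symm hz2.2.2)
                  have hB1 : (Fw.filter BP).card ≤ 1 := by
                    rw [Finset.card_le_one]
                    intro z1 h1 z2 h2
                    rw [Finset.mem_filter] at h1 h2
                    obtain ⟨hz1, hB1'⟩ := h1
                    obtain ⟨hz2, hB2'⟩ := h2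
                    rw [hFw, Finset.mem_filter] at hz1 hz2
                    by_contra hne12
                    exact C8 w z1 z2 hPw.1 (Or.inr ⟨hB1', hB2'⟩) hz1.2.1 hz2.2.1 hne12
                      (Ne.symm hz1.2.2) (Ne.symm hz2.2.2)
                  calc Fw.card ≤ (Fw.filter AP ∪ Fw.filter BP).card :=
                        Finset.card_le_card hFsub
                    _ ≤ (Fw.filter AP).card + (Fw.filter BP).card :=
                        Finset.card_union_le _ _
                    _ ≤ 2 := by omega
        _ = 2 * Pf.card := by rw [Finset.sum_const, smul_eq_mul, mul_comm]
    have hMbound : Gᶜ.edgeSet.toFinset.card ≤ 1 + Kf.card + Tx.card + Ty.card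
        + 2 * Pf.card := by
      calc Gᶜ.edgeSet.toFinset.card ≤ EBig.card := Finset.card_le_card hsub
        _ ≤ E1.card + E2.card + E3.card + E4.card + E5.card := by
            rw [hEBig]
            calc (E1 ∪ E2 ∪ E3 ∪ E4 ∪ E5).card
                ≤ (E1 ∪ E2 ∪ E3 ∪ E4).card + E5.card := Finset.card_union_le _ _
              _ ≤ (E1 ∪ E2 ∪ E3).card + E4.card + E5.card := by
                  have := Finset.card_union_le (E1 ∪ E2 ∪ E3) E4
                  omega
              _ ≤ (E1 ∪ E2).card + E3.card + E4.card + E5.card := by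
                  have := Finset.card_union_le (E1 ∪ E2) E3
                  omega
              _ ≤ E1.card + E2.card + E3.card + E4.card + E5.card := by
                  have := Finset.card_union_le E1 E2
                  omega
        _ ≤ 1 + Kf.card + Tx.card + Ty.card + 2 * Pf.card := by
            have h1 : E1.card = 1 := by rw [hE1]; rfl
            have h2 : E2.card ≤ Kf.card := Finset.card_image_le
            have h3 : E3.card ≤ Tx.card := Finset.card_image_le
            have h4 : E4.card ≤ Ty.card := Finset.card_image_le
            omega
    -- disjointness facts and small lower bounds
    have hTxK : Tx ⊆ Kf := Finset.filter_subset _ _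
    have hTyK : Ty ⊆ Kf := Finset.filter_subset _ _
    have hPK : Pf ⊆ Kf := by
      intro v hv
      rw [hmemP] at hv
      exact (hmemK v).mpr hv.1
    have hsum : Tx.card + Ty.card + Pf.card ≤ Kf.card := by
      have hd1 : Disjoint Tx Ty := by
        rw [Finset.disjoint_left]
        intro z hz1 hz2
        rw [hTx, Finset.mem_filter, hmemK] at hz1
        rw [hTy, Finset.mem_filter] at hz2
        rcases F1 z hz1.1.1 with h | h
        · exact hz1.2 h
        · exact hz2.2 h
      have hd2 : Disjoint (Tx ∪ Ty) Pf := by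
        rw [Finset.disjoint_left]
        intro z hz1 hz2
        rw [hmemP] at hz2
        rcases Finset.mem_union.mp hz1 with h | h
        · rw [hTx, Finset.mem_filter] at h
          exact h.2 hz2.2.1
        · rw [hTy, Finset.mem_filter] at h
          exact h.2 hz2.2.2
      calc Tx.card + Ty.card + Pf.card = (Tx ∪ Ty).card + Pf.card := by
            rw [Finset.card_union_of_disjoint hd1]
        _ = (Tx ∪ Ty ∪ Pf).card := (Finset.card_union_of_disjoint hd2).symm
        _ ≤ Kf.card := Finset.card_le_card (by
            intro z hz
            rcases Finset.mem_union.mp hz with h | h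
            · rcases Finset.mem_union.mp h with h' | h'
              · exact hTxK h'
              · exact hTyK h'
            · exact hPK h)
    have htx1 : 1 ≤ Tx.card := by
      refine Finset.card_pos.mpr ⟨vs, ?_⟩
      rw [hTx, Finset.mem_filter, hmemK]
      exact ⟨hKvs, hvsx⟩
    have hty1 : 1 ≤ Ty.card := by
      refine Finset.card_pos.mpr ⟨us, ?_⟩
      rw [hTy, Finset.mem_filter, hmemK]
      exact ⟨hKus, husy⟩
    have hp1 : 1 ≤ Pf.card := by
      refine Finset.card_pos.mpr ⟨d, ?_⟩
      rw [hmemP]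
      exact ⟨hKd, hdx, hdy⟩
    -- final arithmetic
    have hfin : Gᶜ.edgeSet.toFinset.card + 1 ≤ 3 * Kf.card := by omega
    have harith : 3 * Kf.card * 4 ≤ (Kf.card + 3) ^ 2 := by
      zify
      nlinarith [sq_nonneg ((Kf.card : ℤ) - 3)]
    rw [Set.ncard_eq_toFinset_card', hn]
    have : Gᶜ.edgeSet.toFinset.card + 1 ≤ (Kf.card + 3) ^ 2 / 4 := by
      rw [Nat.le_div_iff_mul_le (by norm_num)]
      calc (Gᶜ.edgeSet.toFinset.card + 1) * 4 ≤ 3 * Kf.card * 4 := by omega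
        _ ≤ (Kf.card + 3) ^ 2 := harith
    omega
end
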